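/- arXiv:1311.3896 — 11 statements merged into one kernel-verified Lean document; each statement's English description precedes it below -/
import Mathlib

section
/- Let G be Fréchet(α) distributed. For differentiable φ on (0,∞) with φ(x)e^{-x^{-α}} → 0 as x → ∞ and as x → 0+, and f differentiable with |f(0+)| < ∞ and lim_{x→∞}|f(x)| < ∞ (assuming absolute integrability of all terms), E[f(G)(φ'(G)G^{α+1} + α φ(G))] = -E[G^{α+1} f'(G) φ(G)]. -/
open Real MeasureTheory Filter Set

/-- FTC on `(0,∞)` with limits at both endpoints. -/
lemma ftc_Ioi_zero (g g' : ℝ → ℝ)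
    (hderiv : ∀ x ∈ Set.Ioi (0 : ℝ), HasDerivAt g (g' x) x)
    (hint : IntegrableOn g' (Set.Ioi 0))
    (m l : ℝ) (h0 : Tendsto g (nhdsWithin 0 (Set.Ioi 0)) (nhds m))
    (htop : Tendsto g atTop (nhds l)) :
    ∫ x in Set.Ioi (0 : ℝ), g' x = l - m := by
  set s : ℕ → Set ℝ := fun n => Set.Ioi ((n + 1 : ℝ)⁻¹) with hs
  have hpos : ∀ n : ℕ, (0 : ℝ) < (n + 1 : ℝ)⁻¹ := by
    intro n; positivity
  have hmono : Monotone s := by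
    intro a b hab
    apply Ioi_subset_Ioi
    have h : (a : ℝ) + 1 ≤ (b : ℝ) + 1 := by
      have : (a : ℝ) ≤ b := Nat.cast_le.mpr hab
      linarith
    exact inv_anti₀ (by positivity) h
  have hunion : (⋃ n, s n) = Set.Ioi (0 : ℝ) := by
    ext x
    simp only [mem_iUnion, mem_Ioi, hs]
    constructor
    · rintro ⟨n, hn⟩; exact (hpos n).trans hn
    · intro hx
      obtain ⟨n, hn⟩ := exists_nat_gt x⁻¹
      refine ⟨n, ?_⟩
      have h1 : x⁻¹ < (n : ℝ) + 1 := by linarith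
      exact inv_lt_of_inv_lt₀ hx h1
  have hIoiSub : ∀ n, s n ⊆ Set.Ioi (0 : ℝ) := by
    intro n; rw [← hunion]; exact subset_iUnion s n
  have key : ∀ n : ℕ, ∫ x in s n, g' x = l - g ((n + 1 : ℝ)⁻¹) := by
    intro n
    apply integral_Ioi_of_hasDerivAt_of_tendsto
    · exact ((hderiv _ (hpos n)).continuousAt).continuousWithinAt
    · intro x hx
      exact hderiv x (lt_trans (hpos n) hx)
    · exact hint.mono (hIoiSub n) le_rfl
    · exact htop
  have htends : Tendsto (fun n : ℕ => ∫ x in s n, g' x) atTop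
      (nhds (∫ x in Set.Ioi (0 : ℝ), g' x)) := by
    have := tendsto_setIntegral_of_monotone (fun n => measurableSet_Ioi) hmono
      (by rw [hunion]; exact hint)
    rwa [hunion] at this
  have hseq : Tendsto (fun n : ℕ => (n + 1 : ℝ)⁻¹) atTop (nhdsWithin 0 (Set.Ioi 0)) := by
    apply tendsto_nhdsWithin_of_tendsto_nhds_of_eventually_within
    · exact tendsto_one_div_add_atTop_nhds_zero_nat.congr (fun n => by rw [one_div])
    · exact Eventually.of_forall fun n => hpos n
  have htends2 : Tendsto (fun n : ℕ => ∫ x in s n, g' x) atTop (nhds (l - m)) := by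
    simp only [key]
    exact tendsto_const_nhds.sub (h0.comp hseq)
  exact tendsto_nhds_unique htends htends2

theorem frechet_integration_by_parts (α : ℝ) (hα : 0 < α)
    (φ f : ℝ → ℝ)
    (hφdiff : ∀ x ∈ Set.Ioi (0 : ℝ), DifferentiableAt ℝ φ x)
    (hfdiff : ∀ x ∈ Set.Ioi (0 : ℝ), DifferentiableAt ℝ f x)
    (hlim_top : Tendsto (fun x => φ x * Real.exp (-(x ^ (-α)))) atTop (nhds 0))
    (hlim_zero : Tendsto (fun x => φ x * Real.exp (-(x ^ (-α))))
      (nhdsWithin 0 (Set.Ioi 0)) (nhds 0))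
    (Lf0 : ℝ) (hf0 : Tendsto f (nhdsWithin 0 (Set.Ioi 0)) (nhds Lf0))
    (Lftop : ℝ) (hftop : Tendsto f atTop (nhds Lftop))
    (hint1 : IntegrableOn
      (fun x => f x * (deriv φ x * x ^ (α + 1) + α * φ x) *
        (α * x ^ (-α - 1) * Real.exp (-(x ^ (-α))))) (Set.Ioi 0))
    (hint2 : IntegrableOn
      (fun x => x ^ (α + 1) * deriv f x * φ x *
        (α * x ^ (-α - 1) * Real.exp (-(x ^ (-α))))) (Set.Ioi 0)) :
    ∫ x in Set.Ioi (0 : ℝ),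
        f x * (deriv φ x * x ^ (α + 1) + α * φ x) *
          (α * x ^ (-α - 1) * Real.exp (-(x ^ (-α)))) =
      -∫ x in Set.Ioi (0 : ℝ),
        x ^ (α + 1) * deriv f x * φ x *
          (α * x ^ (-α - 1) * Real.exp (-(x ^ (-α)))) := by
  set I1 : ℝ → ℝ := fun x => f x * (deriv φ x * x ^ (α + 1) + α * φ x) *
    (α * x ^ (-α - 1) * Real.exp (-(x ^ (-α)))) with hI1
  set I2 : ℝ → ℝ := fun x => x ^ (α + 1) * deriv f x * φ x *
    (α * x ^ (-α - 1) * Real.exp (-(x ^ (-α)))) with hI2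
  set g : ℝ → ℝ := fun x => α * (f x * (φ x * Real.exp (-(x ^ (-α))))) with hg
  -- derivative of g on (0,∞)
  have hderiv : ∀ x ∈ Set.Ioi (0 : ℝ), HasDerivAt g (I1 x + I2 x) x := by
    intro x hx
    have hx0 : (0 : ℝ) < x := hx
    have hE : HasDerivAt (fun x : ℝ => Real.exp (-(x ^ (-α))))
        (α * x ^ (-α - 1) * Real.exp (-(x ^ (-α)))) x := by
      have h1 : HasDerivAt (fun x : ℝ => x ^ (-α)) (-α * x ^ (-α - 1)) x :=
        Real.hasDerivAt_rpow_const (Or.inl (ne_of_gt hx0))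
      have h2 : HasDerivAt (fun x : ℝ => -(x ^ (-α))) (α * x ^ (-α - 1)) x := by
        have := h1.neg
        simpa [Pi.neg_def] using this
      simpa [mul_comm] using h2.exp
    have hφ : HasDerivAt φ (deriv φ x) x := (hφdiff x hx).hasDerivAt
    have hf : HasDerivAt f (deriv f x) x := (hfdiff x hx).hasDerivAt
    have hH : HasDerivAt (fun x => φ x * Real.exp (-(x ^ (-α))))
        (deriv φ x * Real.exp (-(x ^ (-α))) +
          φ x * (α * x ^ (-α - 1) * Real.exp (-(x ^ (-α))))) x := hφ.mul hE
    have hgd := (hf.mul hH).const_mul α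
    refine hgd.congr_deriv (Eq.symm ?_)
    have hxx : x ^ (α + 1) * x ^ (-α - 1) = 1 := by
      rw [← Real.rpow_add hx0]
      norm_num
    simp only [hI1, hI2]
    linear_combination (α * f x * deriv φ x * Real.exp (-(x ^ (-α))) +
      α * deriv f x * φ x * Real.exp (-(x ^ (-α)))) * hxx
  have hintg : IntegrableOn (fun x => I1 x + I2 x) (Set.Ioi 0) := hint1.add hint2
  have h0 : Tendsto g (nhdsWithin 0 (Set.Ioi 0)) (nhds (α * (Lf0 * 0))) :=
    (hf0.mul hlim_zero).const_mul α
  have htop : Tendsto g atTop (nhds (α * (Lftop * 0))) := (hftop.mul hlim_top).const_mul α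
  have := ftc_Ioi_zero g (fun x => I1 x + I2 x) hderiv hintg (α * (Lf0 * 0)) (α * (Lftop * 0)) h0 htop
  rw [integral_add hint1 hint2] at this
  simp only [mul_zero, sub_zero] at this
  linarith [this]
end

section
/- For a measurable function h with E|h(G)| < ∞ where G is Fréchet(α), the function φ_h(x) = e^{x^{-α}} ∫_0^x (h(y) - E h(G)) y^{-α-1} e^{-y^{-α}} dy satisfies the Stein equation φ_h'(x) x^{α+1} + α φ_h(x) = h(x) - E h(G) for all x > 0. -/
open Real MeasureTheory Filter Set

theorem frechet_stein_equation_solution (α : ℝ) (hα : 0 < α)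
    (h : ℝ → ℝ) (hcont : ContinuousOn h (Set.Ioi 0))
    (hint : IntegrableOn
      (fun y => |h y| * (α * y ^ (-α - 1) * Real.exp (-(y ^ (-α))))) (Set.Ioi 0))
    (μh : ℝ)
    (hμh : μh = ∫ y in Set.Ioi (0 : ℝ), h y * (α * y ^ (-α - 1) * Real.exp (-(y ^ (-α)))))
    (φh : ℝ → ℝ)
    (hφh : ∀ x : ℝ, 0 < x → φh x =
      Real.exp (x ^ (-α)) *
        ∫ y in Set.Ioo (0 : ℝ) x, (h y - μh) * y ^ (-α - 1) * Real.exp (-(y ^ (-α)))) :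
    ∀ x : ℝ, 0 < x → deriv φh x * x ^ (α + 1) + α * φh x = h x - μh := by
  set w : ℝ → ℝ := fun y => y ^ (-α - 1) * Real.exp (-(y ^ (-α))) with hw
  set g : ℝ → ℝ := fun y => (h y - μh) * y ^ (-α - 1) * Real.exp (-(y ^ (-α))) with hg
  have hwc : ContinuousOn w (Set.Ioi 0) := by
    intro y hy
    have hy0 : (y : ℝ) ≠ 0 := ne_of_gt hy
    exact ((Real.continuousAt_rpow_const y (-α - 1) (Or.inl hy0)).mul
      (((Real.continuousAt_rpow_const y (-α) (Or.inl hy0)).neg).rexp)).continuousWithinAt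
  have hgc : ContinuousOn g (Set.Ioi 0) := by
    intro y hy
    have hy0 : (y : ℝ) ≠ 0 := ne_of_gt hy
    exact (((hcont y hy).sub continuousWithinAt_const).mul
      (Real.continuousAt_rpow_const y (-α - 1) (Or.inl hy0)).continuousWithinAt).mul
      (((Real.continuousAt_rpow_const y (-α) (Or.inl hy0)).neg).rexp).continuousWithinAt
  -- exp(-(y^(-α))) → 0 as y → 0+
  have htend : Tendsto (fun y : ℝ => Real.exp (-(y ^ (-α))))
      (nhdsWithin 0 (Set.Ioi 0)) (nhds 0) := by
    have h1 : Tendsto (fun y : ℝ => y ^ α) (nhdsWithin 0 (Set.Ioi 0))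
        (nhdsWithin 0 (Set.Ioi 0)) := by
      rw [tendsto_nhdsWithin_iff]
      constructor
      · have := (Real.continuousAt_rpow_const 0 α (Or.inr hα.le)).continuousWithinAt
          (s := Set.Ioi (0:ℝ))
        simpa [ContinuousWithinAt, Real.zero_rpow (ne_of_gt hα)] using this
      · filter_upwards [self_mem_nhdsWithin] with y hy
        exact Real.rpow_pos_of_pos hy α
    have h3 : Tendsto (fun y : ℝ => y ^ (-α)) (nhdsWithin 0 (Set.Ioi 0)) atTop := by
      apply h1.inv_tendsto_nhdsGT_zero.congr'
      filter_upwards [self_mem_nhdsWithin] with y hy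
      simp [Real.rpow_neg (le_of_lt hy)]
    exact Real.tendsto_exp_neg_atTop_nhds_zero.comp h3
  intro x hx
  -- integrability of α * w on Ioc 0 x via FTC for nonneg derivatives
  have hWint : IntegrableOn (fun y => α * w y) (Set.Ioc 0 x) := by
    set V : ℝ → ℝ := fun y => if 0 < y then Real.exp (-(y ^ (-α))) else 0 with hV
    have hVd : ∀ y ∈ Set.Ioo (0:ℝ) x, HasDerivAt V (α * w y) y := by
      intro y hy
      have hy0 : 0 < y := hy.1
      have hd1 : HasDerivAt (fun t : ℝ => t ^ (-α)) ((-α) * y ^ (-α - 1)) y :=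
        Real.hasDerivAt_rpow_const (Or.inl (ne_of_gt hy0))
      have hd2 : HasDerivAt (fun t : ℝ => Real.exp (-(t ^ (-α))))
          (-((-α) * y ^ (-α - 1)) * Real.exp (-(y ^ (-α)))) y := by
        have := (hd1.neg).exp
        convert this using 1
        · rfl
        change _ = Real.exp (-(y ^ (-α))) * _
        ring
      have hd3 : HasDerivAt (fun t : ℝ => Real.exp (-(t ^ (-α)))) (α * w y) y := by
        convert hd2 using 1
        simp only [hw]
        ring
      apply hd3.congr_of_eventuallyEq
      filter_upwards [Ioi_mem_nhds hy0] with t ht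
      simp [hV, Set.mem_Ioi.mp ht]
    have hVc : ContinuousOn V (Set.Icc 0 x) := by
      intro y hy
      rcases eq_or_lt_of_le hy.1 with rfl | hy0
      · have key : Tendsto V (nhdsWithin 0 (Set.Ioi 0)) (nhds 0) := by
          apply htend.congr'
          filter_upwards [self_mem_nhdsWithin] with t ht
          simp [hV, Set.mem_Ioi.mp ht]
        have hsub : Set.Icc (0:ℝ) x ⊆ insert 0 (Set.Ioi 0) := by
          intro t ht
          rcases eq_or_lt_of_le ht.1 with rfl | ht0
          · exact Set.mem_insert _ _
          · exact Set.mem_insert_of_mem _ ht0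
        have h0 : V 0 = 0 := by simp [hV]
        rw [ContinuousWithinAt, h0]
        apply Tendsto.mono_left _ (nhdsWithin_mono 0 hsub)
        rw [nhdsWithin_insert]
        apply tendsto_sup.2
        constructor
        · simpa [h0] using tendsto_pure_nhds V 0
        · exact key
      · have hc : ContinuousAt V y := by
          have hc2 : ContinuousAt (fun t : ℝ => Real.exp (-(t ^ (-α)))) y :=
            ((Real.continuousAt_rpow_const y (-α) (Or.inl (ne_of_gt hy0))).neg).rexp
          apply hc2.congr
          filter_upwards [Ioi_mem_nhds hy0] with t ht
          simp [hV, Set.mem_Ioi.mp ht]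
        exact hc.continuousWithinAt
    have hpos : ∀ y ∈ Set.Ioo (0:ℝ) x, 0 ≤ α * w y := by
      intro y hy
      have : 0 ≤ w y := mul_nonneg (Real.rpow_nonneg (le_of_lt hy.1) _) (Real.exp_nonneg _)
      positivity
    exact intervalIntegral.integrableOn_deriv_of_nonneg hVc hVd hpos
  have hwint : IntegrableOn w (Set.Ioc 0 x) := by
    have h2 := hWint.const_mul α⁻¹
    exact MeasureTheory.IntegrableOn.congr_fun h2 (fun y _ => by field_simp) measurableSet_Ioc
  have hhw : IntegrableOn (fun y => h y * w y) (Set.Ioc 0 x) := by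
    have hm : AEStronglyMeasurable (fun y => h y * w y) (volume.restrict (Set.Ioc 0 x)) := by
      apply ContinuousOn.aestronglyMeasurable _ measurableSet_Ioc
      exact (hcont.mono Set.Ioc_subset_Ioi_self).mul (hwc.mono Set.Ioc_subset_Ioi_self)
    apply Integrable.mono' ((hint.mono_set Set.Ioc_subset_Ioi_self).const_mul α⁻¹) hm
    filter_upwards [ae_restrict_mem measurableSet_Ioc] with y hy
    have hw0 : 0 ≤ w y := mul_nonneg (Real.rpow_nonneg (le_of_lt hy.1) _) (Real.exp_nonneg _)
    have heq : α⁻¹ * (|h y| * (α * y ^ (-α - 1) * Real.exp (-(y ^ (-α))))) = |h y| * w y := by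
      simp only [hw]
      field_simp
    rw [heq, Real.norm_eq_abs, abs_mul, abs_of_nonneg hw0]
  have hgint : IntegrableOn g (Set.Ioc 0 x) := by
    have h2 := hhw.sub (hwint.const_mul μh)
    refine MeasureTheory.IntegrableOn.congr_fun h2 (fun y _ => ?_) measurableSet_Ioc
    simp only [hg, hw, Pi.sub_apply]
    ring
  have hgii : IntervalIntegrable g volume 0 x := by
    rw [intervalIntegrable_iff, Set.uIoc_of_le (le_of_lt hx)]
    exact hgint
  have hF : HasDerivAt (fun t => ∫ y in (0:ℝ)..t, g y) (g x) x :=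
    intervalIntegral.integral_hasDerivAt_right hgii
      (ContinuousOn.stronglyMeasurableAtFilter isOpen_Ioi hgc x hx)
      (hgc.continuousAt (Ioi_mem_nhds hx))
  have hE : HasDerivAt (fun t : ℝ => Real.exp (t ^ (-α)))
      (Real.exp (x ^ (-α)) * ((-α) * x ^ (-α - 1))) x :=
    (Real.hasDerivAt_rpow_const (Or.inl (ne_of_gt hx))).exp
  have hprod := hE.mul hF
  have heq2 : φh =ᶠ[nhds x] fun t => Real.exp (t ^ (-α)) * ∫ y in (0:ℝ)..t, g y := by
    filter_upwards [Ioi_mem_nhds hx] with t ht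
    rw [hφh t ht, intervalIntegral.integral_of_le (le_of_lt ht),
      MeasureTheory.integral_Ioc_eq_integral_Ioo]
  have hderiv : deriv φh x =
      Real.exp (x ^ (-α)) * ((-α) * x ^ (-α - 1)) * (∫ y in (0:ℝ)..x, g y)
        + Real.exp (x ^ (-α)) * g x := by
    rw [heq2.deriv_eq]
    exact hprod.deriv
  have hφx : φh x = Real.exp (x ^ (-α)) * ∫ y in (0:ℝ)..x, g y := by
    rw [hφh x hx, intervalIntegral.integral_of_le (le_of_lt hx),
      MeasureTheory.integral_Ioc_eq_integral_Ioo]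
  have h1 : x ^ (-α - 1) * x ^ (α + 1) = 1 := by
    rw [← Real.rpow_add hx]
    norm_num
  have h2 : Real.exp (x ^ (-α)) * Real.exp (-(x ^ (-α))) = 1 := by
    rw [← Real.exp_add]
    simp
  rw [hderiv, hφx, hg]
  set F := ∫ y in (0:ℝ)..x, g y with hF2
  linear_combination (-(α * Real.exp (x ^ (-α)) * F)) * h1
    + (h x - μh) * (Real.exp (x ^ (-α)) * Real.exp (-(x ^ (-α)))) * h1
    + (h x - μh) * h2
end

section
/- Let h be continuous with E|h(G)| < ∞ and φ_h the solution of the Fréchet Stein equation given by φ_h(x) = e^{x^{-α}} ∫_0^x (h(y) - Eh(G)) y^{-α-1} e^{-y^{-α}} dy. Then lim_{x→0+} φ_h(x) = (h(0+) - E h(G))/α, provided h has a limit at 0+. -/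
open Real MeasureTheory Filter Set
open scoped Topology

noncomputable def frW (α : ℝ) (y : ℝ) : ℝ := y ^ (-α - 1) * Real.exp (-(y ^ (-α)))
noncomputable def frF (α : ℝ) (y : ℝ) : ℝ := Real.exp (-(y ^ (-α))) / α

lemma frW_nonneg (α : ℝ) {y : ℝ} (hy : 0 ≤ y) : 0 ≤ frW α y :=
  mul_nonneg (Real.rpow_nonneg hy _) (Real.exp_nonneg _)

lemma continuousOn_frW (α : ℝ) : ContinuousOn (frW α) (Ioi (0:ℝ)) := by
  intro y hy
  have h1 : ContinuousAt (fun y : ℝ => y ^ (-α - 1)) y :=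
    Real.continuousAt_rpow_const y _ (Or.inl (ne_of_gt hy))
  have h2 : ContinuousAt (fun y : ℝ => y ^ (-α)) y :=
    Real.continuousAt_rpow_const y _ (Or.inl (ne_of_gt hy))
  exact (h1.mul (Real.continuous_exp.continuousAt.comp h2.neg)).continuousWithinAt

lemma hasDerivAt_frF {α : ℝ} (hα : 0 < α) {y : ℝ} (hy : 0 < y) :
    HasDerivAt (frF α) (frW α y) y := by
  have h1 : HasDerivAt (fun y : ℝ => y ^ (-α)) (-α * y ^ (-α - 1)) y :=
    Real.hasDerivAt_rpow_const (Or.inl hy.ne')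
  have h2 : HasDerivAt (fun y : ℝ => -(y ^ (-α))) (α * y ^ (-α - 1)) y := by
    have h1' := h1.neg; rw [neg_mul, neg_neg] at h1'; exact h1'
  have h3 := (Real.hasDerivAt_exp _).comp y h2
  have h4 := h3.div_const α
  refine HasDerivAt.congr_deriv h4 ?_
  unfold frW
  field_simp

lemma frF_nonneg (α : ℝ) (y : ℝ) (hα : 0 < α) : 0 ≤ frF α y :=
  div_nonneg (Real.exp_nonneg _) hα.le

lemma frF_le {α : ℝ} (hα : 0 < α) {y : ℝ} (hy : 0 ≤ y) : frF α y ≤ 1 / α := by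
  unfold frF
  gcongr
  rw [Real.exp_le_one_iff]
  simpa using Real.rpow_nonneg hy (-α)

lemma interval_int_frW {α : ℝ} (hα : 0 < α) {ε x : ℝ} (hε : 0 < ε) (hεx : ε ≤ x) :
    ∫ y in ε..x, frW α y = frF α x - frF α ε := by
  apply intervalIntegral.integral_eq_sub_of_hasDerivAt
  · intro y hy
    rw [uIcc_of_le hεx] at hy
    exact hasDerivAt_frF hα (lt_of_lt_of_le hε hy.1)
  · apply ContinuousOn.intervalIntegrable
    apply (continuousOn_frW α).mono
    rw [uIcc_of_le hεx]
    exact fun y hy => lt_of_lt_of_le hε hy.1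

lemma frSeq_pos {x : ℝ} (hx : 0 < x) (n : ℕ) : 0 < x / (n + 1) :=
  div_pos hx (by positivity)

lemma frSeq_le {x : ℝ} (hx : 0 < x) (n : ℕ) : x / (n + 1) ≤ x :=
  div_le_self hx.le (le_add_of_nonneg_left (Nat.cast_nonneg n))

lemma frSeq_tendsto {x : ℝ} : Tendsto (fun n : ℕ => x / (n + 1)) atTop (𝓝 0) := by
  have : Tendsto (fun n : ℕ => ((n : ℝ) + 1)) atTop atTop :=
    tendsto_atTop_add_const_right _ 1 tendsto_natCast_atTop_atTop
  simpa using Filter.Tendsto.div_atTop (tendsto_const_nhds (x := x)) this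

lemma integrableOn_frW {α : ℝ} (hα : 0 < α) {x : ℝ} (hx : 0 < x) :
    IntegrableOn (frW α) (Ioc 0 x) := by
  apply integrableOn_Ioc_of_intervalIntegral_norm_bounded_left
      (a := fun n : ℕ => x / (n + 1)) (l := atTop) (I := 1 / α)
  · intro n
    apply ((continuousOn_frW α).mono ?_).integrableOn_compact isCompact_Icc |>.mono_set
      Ioc_subset_Icc_self
    exact fun y hy => lt_of_lt_of_le (frSeq_pos hx n) hy.1
  · exact frSeq_tendsto
  · filter_upwards with n
    have h1 : ∀ y ∈ Ioc (x / (n + 1)) x, ‖frW α y‖ = frW α y := by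
      intro y hy
      exact Real.norm_of_nonneg (frW_nonneg α (le_of_lt (lt_of_lt_of_le (frSeq_pos hx n) hy.1.le)))
    rw [setIntegral_congr_fun measurableSet_Ioc h1,
      ← intervalIntegral.integral_of_le (frSeq_le hx n),
      interval_int_frW hα (frSeq_pos hx n) (frSeq_le hx n)]
    have := frF_nonneg α (x / (n + 1)) hα
    have := frF_le hα hx.le
    linarith

lemma integral_frW {α : ℝ} (hα : 0 < α) {x : ℝ} (hx : 0 < x) :
    ∫ y in Ioo (0:ℝ) x, frW α y = Real.exp (-(x ^ (-α))) / α := by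
  rw [← integral_Ioc_eq_integral_Ioo]
  have hmono : Monotone (fun n : ℕ => Ioc (x / (n + 1)) x) := by
    intro m n hmn
    apply Ioc_subset_Ioc_left
    apply div_le_div_of_nonneg_left hx.le (by positivity)
    push_cast; linarith [(Nat.cast_le (α := ℝ)).mpr hmn]
  have hunion : (⋃ n : ℕ, Ioc (x / (n + 1)) x) = Ioc (0:ℝ) x := by
    ext y
    simp only [mem_iUnion, mem_Ioc]
    constructor
    · rintro ⟨n, h1, h2⟩
      exact ⟨lt_trans (frSeq_pos hx n) h1, h2⟩
    · rintro ⟨h1, h2⟩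
      obtain ⟨n, hn⟩ := exists_nat_gt (x / y)
      refine ⟨n, ?_, h2⟩
      rw [div_lt_iff₀ (by positivity)]
      rw [div_lt_iff₀ h1] at hn
      nlinarith
  have hlim := tendsto_setIntegral_of_monotone (fun n => measurableSet_Ioc) hmono
    (hunion ▸ integrableOn_frW hα hx) (f := frW α)
  rw [hunion] at hlim
  have hlim2 : Tendsto (fun n : ℕ => ∫ y in Ioc (x / (n + 1)) x, frW α y) atTop
      (𝓝 (frF α x)) := by
    have heq : ∀ n : ℕ, ∫ y in Ioc (x / (n + 1)) x, frW α y
        = frF α x - frF α (x / (n + 1)) := by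
      intro n
      rw [← intervalIntegral.integral_of_le (frSeq_le hx n),
        interval_int_frW hα (frSeq_pos hx n) (frSeq_le hx n)]
    simp_rw [heq]
    have hF0 : Tendsto (fun n : ℕ => frF α (x / (n + 1))) atTop (𝓝 0) := by
      have h1 : Tendsto (fun n : ℕ => (x / (n + 1)) ^ (-α)) atTop atTop := by
        have h2 : ∀ n : ℕ, (x / (n + 1)) ^ (-α) = x ^ (-α) * ((n : ℝ) + 1) ^ α := by
          intro n
          rw [Real.div_rpow hx.le (by positivity),
            Real.rpow_neg (by positivity : (0:ℝ) ≤ (n:ℝ) + 1) α]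
          field_simp
        simp_rw [h2]
        apply Tendsto.const_mul_atTop (Real.rpow_pos_of_pos hx _)
        exact (tendsto_rpow_atTop hα).comp
          (tendsto_atTop_add_const_right _ 1 tendsto_natCast_atTop_atTop)
      have := (Real.tendsto_exp_neg_atTop_nhds_zero.comp h1).div_const α
      simpa [frF] using this
    simpa using (tendsto_const_nhds (x := frF α x)).sub hF0
  have := tendsto_nhds_unique hlim hlim2
  rw [this]
  rfl

theorem frechet_stein_solution_limit_at_zero (α : ℝ) (hα : 0 < α)
    (h : ℝ → ℝ) (hcont : ContinuousOn h (Set.Ioi 0))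
    (hint : IntegrableOn
      (fun y => |h y| * (α * y ^ (-α - 1) * Real.exp (-(y ^ (-α))))) (Set.Ioi 0))
    (μh : ℝ)
    (hμh : μh = ∫ y in Set.Ioi (0 : ℝ), h y * (α * y ^ (-α - 1) * Real.exp (-(y ^ (-α)))))
    (h0 : ℝ) (hh0 : Tendsto h (nhdsWithin 0 (Set.Ioi 0)) (nhds h0))
    (φh : ℝ → ℝ)
    (hφh : ∀ x : ℝ, 0 < x → φh x =
      Real.exp (x ^ (-α)) *
        ∫ y in Set.Ioo (0 : ℝ) x, (h y - μh) * y ^ (-α - 1) * Real.exp (-(y ^ (-α)))) :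
    Tendsto φh (nhdsWithin 0 (Set.Ioi 0)) (nhds ((h0 - μh) / α)) := by
  rw [Metric.tendsto_nhdsWithin_nhds] at hh0 ⊢
  intro ε hε
  obtain ⟨δ, hδ, H⟩ := hh0 (ε * α / 2) (by positivity)
  refine ⟨δ, hδ, ?_⟩
  intro x hx hxd
  have hx0 : (0:ℝ) < x := hx
  have hxδ : x < δ := by rwa [Real.dist_eq, sub_zero, abs_of_pos hx0] at hxd
  have hsub : Ioo (0:ℝ) x ⊆ Ioi 0 := fun y hy => hy.1
  have iw : IntegrableOn (frW α) (Ioo 0 x) :=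
    (integrableOn_frW hα hx0).mono_set Ioo_subset_Ioc_self
  have ihw : IntegrableOn (fun y => h y * frW α y) (Ioo 0 x) := by
    have hmeas : AEStronglyMeasurable (fun y => h y * frW α y) (volume.restrict (Ioo 0 x)) :=
      ((hcont.mono hsub).mul ((continuousOn_frW α).mono hsub)).aestronglyMeasurable
        measurableSet_Ioo
    apply Integrable.mono'
      (g := fun y => α⁻¹ * (|h y| * (α * y ^ (-α - 1) * Real.exp (-(y ^ (-α)))))) ?_ hmeas
    · rw [ae_restrict_iff' measurableSet_Ioo]
      filter_upwards with y hy
      have hw : 0 ≤ frW α y := frW_nonneg α hy.1.le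
      rw [Real.norm_eq_abs, abs_mul, abs_of_nonneg hw]
      apply le_of_eq
      unfold frW
      field_simp
    · exact (hint.mono_set hsub).const_mul α⁻¹
  have ic : ∀ c : ℝ, IntegrableOn (fun y => (h y - c) * frW α y) (Ioo 0 x) := by
    intro c
    have := ihw.sub (iw.const_mul c)
    simp only [sub_mul]; exact this
  have hφ := hφh x hx0
  have hintegrand : ∀ y : ℝ, (h y - μh) * y ^ (-α - 1) * Real.exp (-(y ^ (-α)))
      = (h y - μh) * frW α y := by intro y; unfold frW; ring
  simp_rw [hintegrand] at hφ
  have hsplit : (∫ y in Ioo (0:ℝ) x, (h y - μh) * frW α y)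
      = (∫ y in Ioo (0:ℝ) x, (h y - h0) * frW α y)
        + (h0 - μh) * (Real.exp (-(x ^ (-α))) / α) := by
    have e1 : ∀ y : ℝ, (h y - μh) * frW α y
        = (h y - h0) * frW α y + (h0 - μh) * frW α y := by intro y; ring
    simp_rw [e1]
    rw [integral_add (ic h0) (iw.const_mul (h0 - μh)), integral_const_mul,
      integral_frW hα hx0]
  have he := Real.exp_ne_zero (x ^ (-α))
  have key : φh x - (h0 - μh) / α
      = Real.exp (x ^ (-α)) * ∫ y in Ioo (0:ℝ) x, (h y - h0) * frW α y := by
    rw [hφ, hsplit, Real.exp_neg]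
    field_simp
    ring
  have hbound : |∫ y in Ioo (0:ℝ) x, (h y - h0) * frW α y|
      ≤ (ε * α / 2) * (Real.exp (-(x ^ (-α))) / α) := by
    have hb := norm_integral_le_of_norm_le (μ := volume.restrict (Ioo (0:ℝ) x))
      (f := fun y => (h y - h0) * frW α y) (g := fun y => (ε * α / 2) * frW α y)
      (iw.const_mul _) ?_
    · rw [integral_const_mul, integral_frW hα hx0] at hb
      exact hb
    · rw [ae_restrict_iff' measurableSet_Ioo]
      filter_upwards with y hy
      have hw : 0 ≤ frW α y := frW_nonneg α hy.1.le
      have hy0 : y ∈ Ioi (0:ℝ) := hy.1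
      have hyd : dist y 0 < δ := by
        rw [Real.dist_eq, sub_zero, abs_of_pos hy.1]; linarith [hy.2]
      have hh := H hy0 hyd
      rw [Real.dist_eq] at hh
      rw [Real.norm_eq_abs, abs_mul, abs_of_nonneg hw]
      exact mul_le_mul_of_nonneg_right hh.le hw
  rw [Real.dist_eq, key, abs_mul, abs_of_pos (Real.exp_pos _)]
  calc Real.exp (x ^ (-α)) * |∫ y in Ioo (0:ℝ) x, (h y - h0) * frW α y|
      ≤ Real.exp (x ^ (-α)) * ((ε * α / 2) * (Real.exp (-(x ^ (-α))) / α)) :=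
        mul_le_mul_of_nonneg_left hbound (Real.exp_pos _).le
    _ = ε / 2 := by rw [Real.exp_neg]; field_simp
    _ < ε := by linarith
end

section
/- Let h with E|h(G)| < ∞ and φ_h(x) = e^{x^{-α}} ∫_x^∞ (Eh(G) - h(y)) y^{-α-1} e^{-y^{-α}} dy. Then lim_{x→∞} φ_h(x) = 0. -/
open Real MeasureTheory Filter Set

theorem frechet_stein_solution_limit_at_infty (α : ℝ) (hα : 0 < α)
    (h : ℝ → ℝ) (hmeas : Measurable h)
    (hint : IntegrableOn
      (fun y => |h y| * (α * y ^ (-α - 1) * Real.exp (-(y ^ (-α))))) (Set.Ioi 0))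
    (μh : ℝ)
    (hμh : μh = ∫ y in Set.Ioi (0 : ℝ), h y * (α * y ^ (-α - 1) * Real.exp (-(y ^ (-α)))))
    (φh : ℝ → ℝ)
    (hφh : ∀ x : ℝ, 0 < x → φh x =
      Real.exp (x ^ (-α)) *
        ∫ y in Set.Ioi x, (μh - h y) * y ^ (-α - 1) * Real.exp (-(y ^ (-α)))) :
    Tendsto φh atTop (nhds 0) := by
  set w : ℝ → ℝ := fun y => α * y ^ (-α - 1) * Real.exp (-(y ^ (-α))) with hw
  set g : ℝ → ℝ := fun y => (μh - h y) * y ^ (-α - 1) * Real.exp (-(y ^ (-α))) with hg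
  -- the weight is integrable on (0, ∞)
  have hw_int : IntegrableOn w (Set.Ioi 0) := by
    set F : ℝ → ℝ := fun y => if y ≤ 0 then 0 else Real.exp (-(y ^ (-α))) with hF
    have hderiv : ∀ x ∈ Set.Ioi (0:ℝ), HasDerivAt F (w x) x := by
      intro x hx
      have hx0 : (x : ℝ) ≠ 0 := ne_of_gt hx
      have h1 : HasDerivAt (fun y : ℝ => y ^ (-α)) (-α * x ^ (-α - 1)) x := by
        simpa using Real.hasDerivAt_rpow_const (x := x) (p := -α) (Or.inl hx0)
      have h2 : HasDerivAt (fun y : ℝ => Real.exp (-(y ^ (-α))))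
          (Real.exp (-(x ^ (-α))) * (-(-α * x ^ (-α - 1)))) x := h1.neg.exp
      have h3 : HasDerivAt (fun y : ℝ => Real.exp (-(y ^ (-α)))) (w x) x := by
        convert h2 using 1
        simp only [hw]; ring
      refine h3.congr_of_eventuallyEq ?_
      filter_upwards [Ioi_mem_nhds hx] with y hy
      simp [hF, not_le.mpr (show (0:ℝ) < y from hy)]
    have hlim0 : Tendsto (fun y : ℝ => y ^ (-α)) (nhdsWithin 0 (Set.Ioi 0)) atTop := by
      have : Tendsto (fun y : ℝ => (y⁻¹) ^ α) (nhdsWithin 0 (Set.Ioi 0)) atTop :=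
        (tendsto_rpow_atTop hα).comp tendsto_inv_nhdsGT_zero
      refine this.congr' ?_
      filter_upwards [self_mem_nhdsWithin] with y hy
      have hy' : (0:ℝ) < y := hy
      rw [Real.inv_rpow hy'.le, ← Real.rpow_neg hy'.le]
    have hcont : ContinuousWithinAt F (Set.Ici 0) 0 := by
      have hIci : Set.Ici (0:ℝ) = {0} ∪ Set.Ioi 0 := by
        ext y; simp [le_iff_lt_or_eq, or_comm, eq_comm]
      unfold ContinuousWithinAt
      have hF0 : F 0 = 0 := by simp [hF]
      rw [hF0, hIci, nhdsWithin_union]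
      refine Tendsto.sup ?_ ?_
      · refine tendsto_const_nhds.congr' ?_
        filter_upwards [self_mem_nhdsWithin] with y hy
        simp only [Set.mem_singleton_iff] at hy
        simp [hF, hy]
      · have hcomp : Tendsto (fun y : ℝ => Real.exp (-(y ^ (-α))))
            (nhdsWithin 0 (Set.Ioi 0)) (nhds 0) :=
          Real.tendsto_exp_neg_atTop_nhds_zero.comp hlim0
        refine hcomp.congr' ?_
        filter_upwards [self_mem_nhdsWithin] with y hy
        simp [hF, not_le.mpr (show (0:ℝ) < y from hy)]
    have hpos : ∀ x ∈ Set.Ioi (0:ℝ), 0 ≤ w x := by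
      intro x hx
      have : (0:ℝ) ≤ x ^ (-α - 1) := Real.rpow_nonneg (le_of_lt hx) _
      positivity
    have hlim : Tendsto F atTop (nhds 1) := by
      have : Tendsto (fun y : ℝ => Real.exp (-(y ^ (-α)))) atTop (nhds 1) := by
        have h0 : Tendsto (fun y : ℝ => -(y ^ (-α))) atTop (nhds 0) :=
          (tendsto_rpow_neg_atTop hα).neg.congr (fun y => rfl) |>.mono_right (by simp)
        simpa [Function.comp_def] using (Real.continuous_exp.tendsto 0).comp h0
      refine this.congr' ?_
      filter_upwards [eventually_gt_atTop (0:ℝ)] with y hy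
      simp [hF, not_le.mpr hy]
    exact integrableOn_Ioi_deriv_of_nonneg hcont hderiv hpos hlim
  -- the integrand g is integrable on (0, ∞)
  have hg_meas : AEStronglyMeasurable g (volume.restrict (Set.Ioi 0)) := by
    refine Measurable.aestronglyMeasurable ?_
    have hm1 : Measurable (fun y : ℝ => y ^ (-α - 1)) := by measurability
    have hm2 : Measurable (fun y : ℝ => y ^ (-α)) := by measurability
    exact ((measurable_const.sub hmeas).mul hm1).mul (hm2.neg.exp)
  have hg_int : IntegrableOn g (Set.Ioi 0) := by
    have hb : IntegrableOn
        (fun y => (|μh| / α) * w y + (1 / α) * (|h y| * w y)) (Set.Ioi 0) :=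
      (hw_int.const_mul _).add (hint.const_mul _)
    refine Integrable.mono hb hg_meas ?_
    rw [ae_restrict_iff' measurableSet_Ioi]
    refine Filter.Eventually.of_forall fun y hy => ?_
    have hy0 : (0:ℝ) < y := hy
    have hr : (0:ℝ) ≤ y ^ (-α - 1) := Real.rpow_nonneg hy0.le _
    have he : (0:ℝ) ≤ Real.exp (-(y ^ (-α))) := (Real.exp_pos _).le
    have hwy : (0:ℝ) ≤ w y := by simp only [hw]; positivity
    rw [Real.norm_eq_abs, Real.norm_eq_abs]
    have h1 : |g y| ≤ (|μh| + |h y|) * (y ^ (-α - 1) * Real.exp (-(y ^ (-α)))) := by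
      simp only [hg, abs_mul, abs_of_nonneg hr, abs_of_nonneg he, mul_assoc]
      gcongr
      exact (abs_sub _ _)
    have h2 : (|μh| + |h y|) * (y ^ (-α - 1) * Real.exp (-(y ^ (-α)))) =
        (|μh| / α) * w y + (1 / α) * (|h y| * w y) := by
      simp only [hw]; field_simp
    calc |g y| ≤ (|μh| / α) * w y + (1 / α) * (|h y| * w y) := by rw [← h2]; exact h1
      _ ≤ |(|μh| / α) * w y + (1 / α) * (|h y| * w y)| := le_abs_self _
  -- the tail integral tends to 0
  have htail : Tendsto (fun x => ∫ y in Set.Ioi x, g y) atTop (nhds 0) := by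
    have h1 : Tendsto (fun x => ∫ y in (0:ℝ)..x, g y) atTop
        (nhds (∫ y in Set.Ioi (0:ℝ), g y)) :=
      intervalIntegral_tendsto_integral_Ioi 0 hg_int tendsto_id
    have h2 : Tendsto (fun x => (∫ y in Set.Ioi (0:ℝ), g y) - ∫ y in (0:ℝ)..x, g y)
        atTop (nhds ((∫ y in Set.Ioi (0:ℝ), g y) - ∫ y in Set.Ioi (0:ℝ), g y)) :=
      tendsto_const_nhds.sub h1
    rw [sub_self] at h2
    refine h2.congr' ?_
    filter_upwards [eventually_gt_atTop (0:ℝ)] with x hx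
    have hsplit : (∫ y in Set.Ioc (0:ℝ) x, g y) + (∫ y in Set.Ioi x, g y) =
        ∫ y in Set.Ioi (0:ℝ), g y := by
      rw [← setIntegral_union (Set.Ioc_disjoint_Ioi le_rfl) measurableSet_Ioi
        (hg_int.mono_set Set.Ioc_subset_Ioi_self) (hg_int.mono_set (Set.Ioi_subset_Ioi hx.le)),
        Set.Ioc_union_Ioi_eq_Ioi hx.le]
    rw [intervalIntegral.integral_of_le hx.le]
    linarith
  -- finish
  have hexp : Tendsto (fun x : ℝ => Real.exp (x ^ (-α))) atTop (nhds 1) := by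
    simpa [Function.comp_def] using (Real.continuous_exp.tendsto 0).comp (tendsto_rpow_neg_atTop hα)
  have := hexp.mul htail
  rw [one_mul] at this
  refine this.congr' ?_
  filter_upwards [eventually_gt_atTop (0:ℝ)] with x hx
  rw [hφh x hx]
end

section
/- For h(x) = 1{x ≤ t} with t > 0, the solution φ_h of the Fréchet Stein equation T_α φ = h - Eh(G) is given explicitly by α φ_h(x) = 1 - e^{-t^{-α}} if 0 < x ≤ t and α φ_h(x) = e^{-t^{-α}}(e^{x^{-α}} - 1) if x > t. -/
open Real MeasureTheory Filter Set Topology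

-- derivative helper
lemma frechet_deriv_aux (α : ℝ) (hα : 0 < α) (y : ℝ) (hy : 0 < y) :
    HasDerivAt (fun y : ℝ => Real.exp (-(y ^ (-α))) / α)
      (y ^ (-α - 1) * Real.exp (-(y ^ (-α)))) y := by
  have d1 : HasDerivAt (fun y : ℝ => y ^ (-α)) ((-α) * y ^ (-α - 1)) y :=
    Real.hasDerivAt_rpow_const (Or.inl hy.ne')
  have d2 : HasDerivAt (fun y : ℝ => Real.exp (-(y ^ (-α))) / α)
      (Real.exp (-(y ^ (-α))) * -((-α) * y ^ (-α - 1)) / α) y := ((d1.neg).exp).div_const α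
  convert d2 using 1
  field_simp

lemma frechet_cont_aux (α : ℝ) (y : ℝ) (hy : 0 < y) :
    ContinuousAt (fun y : ℝ => y ^ (-α - 1) * Real.exp (-(y ^ (-α)))) y := by
  have c1 : ContinuousAt (fun y : ℝ => y ^ (-α - 1)) y :=
    Real.continuousAt_rpow_const y _ (Or.inl hy.ne')
  have c2 : ContinuousAt (fun y : ℝ => Real.exp (-(y ^ (-α)))) y :=
    Real.continuous_exp.continuousAt.comp
      ((Real.continuousAt_rpow_const y _ (Or.inl hy.ne')).neg)
  exact c1.mul c2

lemma frechet_aux (α : ℝ) (hα : 0 < α) (x : ℝ) (hx : 0 < x) :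
    IntegrableOn (fun y : ℝ => y ^ (-α - 1) * Real.exp (-(y ^ (-α)))) (Set.Ioo 0 x) ∧
    ∫ y in Set.Ioo (0 : ℝ) x, y ^ (-α - 1) * Real.exp (-(y ^ (-α)))
      = Real.exp (-(x ^ (-α))) / α := by
  set g : ℝ → ℝ := fun y => y ^ (-α - 1) * Real.exp (-(y ^ (-α))) with hg
  have hx' : (0:ℝ) < x⁻¹ := inv_pos.2 hx
  have himg : (fun u : ℝ => u⁻¹) '' Set.Ioi x⁻¹ = Set.Ioo 0 x := by
    rw [Set.image_inv_eq_inv, Set.inv_Ioi₀ hx', inv_inv]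
  have hf' : ∀ u ∈ Set.Ioi x⁻¹, HasDerivWithinAt (fun u : ℝ => u⁻¹)
      (-(u ^ 2)⁻¹) (Set.Ioi x⁻¹) u := fun u hu =>
    (hasDerivAt_inv (lt_trans hx' hu).ne').hasDerivWithinAt
  have hinj : Set.InjOn (fun u : ℝ => u⁻¹) (Set.Ioi x⁻¹) := inv_injective.injOn
  have hval := integral_image_eq_integral_abs_deriv_smul measurableSet_Ioi hf' hinj g
  have hint := integrableOn_image_iff_integrableOn_abs_deriv_smul measurableSet_Ioi hf' hinj g
  rw [himg] at hval hint
  -- pointwise identity on Ioi x⁻¹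
  have key : ∀ u ∈ Set.Ioi x⁻¹,
      |(-(u ^ 2)⁻¹)| • g u⁻¹ = u ^ (α - 1) * Real.exp (-(u ^ α)) := by
    intro u hu
    have hu0 : (0:ℝ) < u := lt_trans hx' hu
    have h1 : (u⁻¹ : ℝ) ^ (-α - 1) = u ^ (α + 1) := by
      rw [Real.inv_rpow hu0.le, ← Real.rpow_neg hu0.le]; ring_nf
    have h2 : (u⁻¹ : ℝ) ^ (-α) = u ^ α := by
      rw [Real.inv_rpow hu0.le, ← Real.rpow_neg hu0.le, neg_neg]
    have h3 : |(-(u ^ 2)⁻¹ : ℝ)| = u ^ (-(2:ℝ)) := by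
      rw [abs_neg, abs_inv, abs_of_pos (pow_pos hu0 2), ← Real.rpow_natCast u 2,
        ← Real.rpow_neg hu0.le]
      norm_num
    simp only [hg, smul_eq_mul, h1, h2, h3]
    rw [← mul_assoc, ← Real.rpow_add hu0]
    ring_nf
  -- compute the Ioi integral
  set G : ℝ → ℝ := fun u => -(Real.exp (-(u ^ α)) / α) with hG
  have hGd : ∀ u ∈ Set.Ioi x⁻¹, HasDerivAt G (u ^ (α - 1) * Real.exp (-(u ^ α))) u := by
    intro u hu
    have hu0 : (0:ℝ) < u := lt_trans hx' hu
    have d1 : HasDerivAt (fun u : ℝ => u ^ α) (α * u ^ (α - 1)) u :=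
      Real.hasDerivAt_rpow_const (Or.inl hu0.ne')
    have d2 : HasDerivAt (fun u : ℝ => -(Real.exp (-(u ^ α)) / α))
        (-(Real.exp (-(u ^ α)) * -(α * u ^ (α - 1)) / α)) u := (((d1.neg).exp).div_const α).neg
    convert d2 using 1
    field_simp
  have hGc : ContinuousWithinAt G (Set.Ici x⁻¹) x⁻¹ := by
    have d1 : HasDerivAt (fun u : ℝ => u ^ α) (α * (x⁻¹) ^ (α - 1)) x⁻¹ :=
      Real.hasDerivAt_rpow_const (Or.inl hx'.ne')
    exact ((((d1.neg).exp).div_const α).neg).continuousAt.continuousWithinAt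
  have hGpos : ∀ u ∈ Set.Ioi x⁻¹, 0 ≤ u ^ (α - 1) * Real.exp (-(u ^ α)) := fun u hu =>
    mul_nonneg (Real.rpow_nonneg (lt_trans hx' hu).le _) (Real.exp_pos _).le
  have hGt : Tendsto G atTop (𝓝 0) := by
    have t1 : Tendsto (fun u : ℝ => u ^ α) atTop atTop := tendsto_rpow_atTop hα
    have t2 : Tendsto (fun u : ℝ => Real.exp (-(u ^ α))) atTop (𝓝 0) :=
      Real.tendsto_exp_atBot.comp (tendsto_neg_atBot_iff.2 t1)
    have := (t2.div_const α).neg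
    simpa using this
  have hIoiVal := integral_Ioi_of_hasDerivAt_of_nonneg hGc hGd hGpos hGt
  have hIoiInt := integrableOn_Ioi_deriv_of_nonneg hGc hGd hGpos hGt
  have hGa : G x⁻¹ = -(Real.exp (-(x ^ (-α))) / α) := by
    have : (x⁻¹ : ℝ) ^ α = x ^ (-α) := by
      rw [Real.inv_rpow hx.le, ← Real.rpow_neg hx.le]
    simp only [hG, this]
  constructor
  · exact hint.2 ((hIoiInt.congr_fun (fun u hu => (key u hu).symm) measurableSet_Ioi))
  · rw [hval, setIntegral_congr_fun measurableSet_Ioi key, hIoiVal, hGa]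
    ring

lemma frechet_aux2 (α : ℝ) (hα : 0 < α) (a b : ℝ) (ha : 0 < a) (hab : a ≤ b) :
    IntegrableOn (fun y : ℝ => y ^ (-α - 1) * Real.exp (-(y ^ (-α)))) (Set.Ioo a b) ∧
    ∫ y in Set.Ioo a b, y ^ (-α - 1) * Real.exp (-(y ^ (-α)))
      = Real.exp (-(b ^ (-α))) / α - Real.exp (-(a ^ (-α))) / α := by
  have hco : ContinuousOn (fun y : ℝ => y ^ (-α - 1) * Real.exp (-(y ^ (-α)))) (Set.Icc a b) :=
    fun y hy => (frechet_cont_aux α y (lt_of_lt_of_le ha hy.1)).continuousWithinAt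
  constructor
  · exact (hco.integrableOn_Icc).mono_set Set.Ioo_subset_Icc_self
  · have hderiv : ∀ y ∈ Set.uIcc a b, HasDerivAt (fun y : ℝ => Real.exp (-(y ^ (-α))) / α)
        (y ^ (-α - 1) * Real.exp (-(y ^ (-α)))) y := by
      intro y hy
      rw [Set.uIcc_of_le hab] at hy
      exact frechet_deriv_aux α hα y (lt_of_lt_of_le ha hy.1)
    have hii : IntervalIntegrable (fun y : ℝ => y ^ (-α - 1) * Real.exp (-(y ^ (-α))))
        volume a b := (hco.mono (by rw [Set.uIcc_of_le hab])).intervalIntegrable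
    have := intervalIntegral.integral_eq_sub_of_hasDerivAt hderiv hii
    rw [intervalIntegral.integral_of_le hab, MeasureTheory.integral_Ioc_eq_integral_Ioo] at this
    rw [this]

theorem frechet_stein_solution_indicator (α : ℝ) (hα : 0 < α) (t : ℝ) (ht : 0 < t)
    (h : ℝ → ℝ) (hh : ∀ x : ℝ, h x = if x ≤ t then 1 else 0)
    (μh : ℝ) (hμh : μh = Real.exp (-(t ^ (-α))))
    (φh : ℝ → ℝ)
    (hφh : ∀ x : ℝ, 0 < x → φh x =
      Real.exp (x ^ (-α)) *
        ∫ y in Set.Ioo (0 : ℝ) x, (h y - μh) * y ^ (-α - 1) * Real.exp (-(y ^ (-α)))) :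
    ∀ x : ℝ, 0 < x →
      α * φh x =
        if x ≤ t then 1 - Real.exp (-(t ^ (-α)))
        else Real.exp (-(t ^ (-α))) * (Real.exp (x ^ (-α)) - 1) := by
  intro x hx
  rw [hφh x hx]
  set g : ℝ → ℝ := fun y => y ^ (-α - 1) * Real.exp (-(y ^ (-α))) with hg
  have hexp : Real.exp (x ^ (-α)) * Real.exp (-(x ^ (-α))) = 1 := by
    rw [← Real.exp_add]; simp
  by_cases hxt : x ≤ t
  · rw [if_pos hxt]
    have heq : ∀ y ∈ Set.Ioo (0:ℝ) x,
        (h y - μh) * y ^ (-α - 1) * Real.exp (-(y ^ (-α))) = (1 - μh) * g y := by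
      intro y hy
      rw [hh y, if_pos (le_trans hy.2.le hxt), hg]
      ring
    rw [setIntegral_congr_fun measurableSet_Ioo heq, MeasureTheory.integral_const_mul,
      (frechet_aux α hα x hx).2, hμh]
    field_simp
    linear_combination (1 - Real.exp (-(t ^ (-α)))) * hexp
  · rw [if_neg hxt]
    have htx : t < x := lt_of_not_ge hxt
    have hsplit : Set.Ioc (0:ℝ) t ∪ Set.Ioo t x = Set.Ioo 0 x :=
      Set.Ioc_union_Ioo_eq_Ioo ht.le htx
    have hdisj : Disjoint (Set.Ioc (0:ℝ) t) (Set.Ioo t x) := by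
      rw [Set.disjoint_left]
      rintro y ⟨_, h1⟩ ⟨h2, _⟩
      exact absurd h2 (not_lt.2 h1)
    set F : ℝ → ℝ := fun y => (h y - μh) * y ^ (-α - 1) * Real.exp (-(y ^ (-α))) with hF
    have heq1 : ∀ y ∈ Set.Ioc (0:ℝ) t, F y = (1 - μh) * g y := by
      intro y hy
      simp only [hF, hg, hh y, if_pos hy.2]
      ring
    have heq2 : ∀ y ∈ Set.Ioo t x, F y = (-μh) * g y := by
      intro y hy
      simp only [hF, hg, hh y, if_neg (not_le.2 hy.1)]
      ring
    have hint1 : IntegrableOn F (Set.Ioc 0 t) := by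
      have hgi : IntegrableOn g (Set.Ioc 0 t) :=
        ((frechet_aux α hα t ht).1).congr_set_ae (Ioo_ae_eq_Ioc).symm
      exact MeasureTheory.IntegrableOn.congr_fun (hgi.const_mul (1 - μh)) (fun y hy => (heq1 y hy).symm) measurableSet_Ioc
    have hint2 : IntegrableOn F (Set.Ioo t x) := by
      have hgi : IntegrableOn g (Set.Ioo t x) := (frechet_aux2 α hα t x ht htx.le).1
      exact MeasureTheory.IntegrableOn.congr_fun (hgi.const_mul (-μh)) (fun y hy => (heq2 y hy).symm) measurableSet_Ioo
    have hval1 : ∫ y in Set.Ioc (0:ℝ) t, F y = (1 - μh) * (Real.exp (-(t ^ (-α))) / α) := by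
      rw [setIntegral_congr_fun measurableSet_Ioc heq1, MeasureTheory.integral_const_mul,
        MeasureTheory.integral_Ioc_eq_integral_Ioo, (frechet_aux α hα t ht).2]
    have hval2 : ∫ y in Set.Ioo t x, F y
        = (-μh) * (Real.exp (-(x ^ (-α))) / α - Real.exp (-(t ^ (-α))) / α) := by
      rw [setIntegral_congr_fun measurableSet_Ioo heq2, MeasureTheory.integral_const_mul,
        (frechet_aux2 α hα t x ht htx.le).2]
    have : ∫ y in Set.Ioo (0:ℝ) x, F y
        = (∫ y in Set.Ioc (0:ℝ) t, F y) + ∫ y in Set.Ioo t x, F y := by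
      rw [← hsplit, MeasureTheory.setIntegral_union hdisj measurableSet_Ioo hint1 hint2]
    rw [show (∫ y in Set.Ioo (0:ℝ) x, (h y - μh) * y ^ (-α - 1) * Real.exp (-(y ^ (-α))))
        = ∫ y in Set.Ioo (0:ℝ) x, F y from rfl, this, hval1, hval2, hμh]
    field_simp
    linear_combination (-1 : ℝ) * hexp
end

section
/- For every t > 0 and every x > 0, the solution φ_h of the Fréchet Stein equation with h = 1{· ≤ t} satisfies |φ_h(x)| ≤ (1 - e^{-t^{-α}})/α ≤ 1/α. In particular ‖φ_h‖_∞ ≤ 1/α. -/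
open Real

theorem frechet_stein_solution_indicator_bound (α : ℝ) (hα : 0 < α) (t : ℝ) (ht : 0 < t)
    (φh : ℝ → ℝ)
    (hφh : ∀ x : ℝ, 0 < x →
      α * φh x =
        if x ≤ t then 1 - Real.exp (-(t ^ (-α)))
        else Real.exp (-(t ^ (-α))) * (Real.exp (x ^ (-α)) - 1)) :
    ∀ x : ℝ, 0 < x →
      |φh x| ≤ (1 - Real.exp (-(t ^ (-α)))) / α ∧
      (1 - Real.exp (-(t ^ (-α)))) / α ≤ 1 / α := by
  intro x hx
  have htα : (0:ℝ) ≤ t ^ (-α) := Real.rpow_nonneg ht.le _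
  have hxα : (0:ℝ) ≤ x ^ (-α) := Real.rpow_nonneg hx.le _
  have he1 : Real.exp (-(t ^ (-α))) ≤ 1 := Real.exp_le_one_iff.mpr (neg_nonpos.mpr htα)
  have h := hφh x hx
  have habs : |α * φh x| ≤ 1 - Real.exp (-(t ^ (-α))) := by
    rw [h]
    split_ifs with hxt
    · rw [abs_of_nonneg (by linarith)]
    · push_neg at hxt
      have hle : x ^ (-α) ≤ t ^ (-α) := by
        rw [Real.rpow_neg ht.le, Real.rpow_neg hx.le]
        exact inv_anti₀ (Real.rpow_pos_of_pos ht _)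
          (Real.rpow_le_rpow ht.le hxt.le hα.le)
      have hE : 1 ≤ Real.exp (x ^ (-α)) := Real.one_le_exp hxα
      have key : Real.exp (-(t ^ (-α))) * Real.exp (x ^ (-α)) ≤ 1 := by
        rw [← Real.exp_add]
        exact Real.exp_le_one_iff.mpr (by linarith)
      rw [abs_of_nonneg (by nlinarith [Real.exp_pos (-(t ^ (-α)))])]
      nlinarith
  constructor
  · rw [abs_mul, abs_of_pos hα] at habs
    rw [le_div_iff₀ hα]
    linarith
  · gcongr
    · linarith [Real.exp_pos (-(t ^ (-α)))]
end

section
/- Let W_n have density f_n(x) = α x^{-α-1}(1 - x^{-α}/n)^{n-1} on (n^{-1/α}, ∞). Then E[ |1 - ((n-1)/n)(1 - W_n^{-α}/n)^{-1}| ] = (2/(n-1))(1 - 1/n)^n. -/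
open Real MeasureTheory Set

lemma pareto_aux_deriv (α : ℝ) (hα : 0 < α) (n : ℕ) (hn : 2 ≤ n) (x : ℝ) (hx : 0 < x) :
    HasDerivAt (fun y : ℝ => (1 - y ^ (-α) / n) ^ (n - 1) * y ^ (-α) / n)
      (α / n * x ^ (-α - 1) * (x ^ (-α) - 1) * (1 - x ^ (-α) / n) ^ (n - 2)) x := by
  have hn0 : (0:ℝ) < n := by positivity
  have h1 : HasDerivAt (fun y : ℝ => y ^ (-α)) (-α * x ^ (-α - 1)) x := by
    simpa using Real.hasDerivAt_rpow_const (x := x) (p := -α) (Or.inl hx.ne')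
  have h2 : HasDerivAt (fun y : ℝ => 1 - y ^ (-α) / n) (α * x ^ (-α - 1) / n) x := by
    have := (h1.div_const (n:ℝ)).const_sub 1
    exact this.congr_deriv (by ring)
  have h3 := (h2.pow (n - 1)).mul h1
  have h4 := h3.div_const (n:ℝ)
  refine h4.congr_deriv ?_
  have hsub : n - 1 - 1 = n - 2 := by omega
  have hsucc : n - 1 = (n - 2) + 1 := by omega
  rw [hsub, hsucc, pow_succ]
  simp only [Pi.mul_apply, Pi.pow_apply]
  push_cast [Nat.cast_sub hn]
  field_simp
  ring

theorem pareto_max_expectation (α : ℝ) (hα : 0 < α) (n : ℕ) (hn : 2 ≤ n)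
    (fn : ℝ → ℝ)
    (hfn : ∀ x : ℝ, fn x =
      if (n : ℝ) ^ (-(1 / α)) < x then α * x ^ (-α - 1) * (1 - x ^ (-α) / n) ^ (n - 1)
      else 0) :
    ∫ x in Set.Ioi ((n : ℝ) ^ (-(1 / α))),
        |1 - ((n : ℝ) - 1) / n * (1 - x ^ (-α) / n)⁻¹| * fn x =
      2 / ((n : ℝ) - 1) * (1 - 1 / n) ^ n := by
  have hnR : (2:ℝ) ≤ n := by exact_mod_cast hn
  have hn0 : (0:ℝ) < n := by linarith
  have hn1 : (1:ℝ) < n := by linarith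
  set a : ℝ := (n : ℝ) ^ (-(1 / α)) with ha_def
  have ha_pos : 0 < a := Real.rpow_pos_of_pos hn0 _
  have ha_lt1 : a < 1 := by
    apply Real.rpow_lt_one_of_one_lt_of_neg hn1
    exact neg_lt_zero.mpr (by positivity)
  have ha_pow : a ^ (-α) = (n:ℝ) := by
    rw [ha_def, ← Real.rpow_mul hn0.le,
      show -(1 / α) * -α = 1 by field_simp, Real.rpow_one]
  -- the antiderivative and integrand
  set F : ℝ → ℝ := fun y => (1 - y ^ (-α) / n) ^ (n - 1) * y ^ (-α) / n with hF_def
  set G : ℝ → ℝ := fun y => α / n * y ^ (-α - 1) * (y ^ (-α) - 1) * (1 - y ^ (-α) / n) ^ (n - 2)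
    with hG_def
  set g : ℝ → ℝ := fun y => α / n * y ^ (-α - 1) * |1 - y ^ (-α)| * (1 - y ^ (-α) / n) ^ (n - 2)
    with hg_def
  have hu_pos : ∀ x, a < x → 0 < 1 - x ^ (-α) / n := by
    intro x hx
    have hxα : x ^ (-α) < a ^ (-α) :=
      Real.rpow_lt_rpow_of_neg ha_pos hx (neg_lt_zero.mpr hα)
    rw [ha_pow] at hxα
    have : x ^ (-α) / n < 1 := (div_lt_one hn0).mpr hxα
    linarith
  -- rewrite the integrand
  have hcongr : ∀ x ∈ Ioi a, |1 - ((n : ℝ) - 1) / n * (1 - x ^ (-α) / n)⁻¹| * fn x = g x := by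
    intro x hx
    simp only [mem_Ioi] at hx
    have hu := hu_pos x hx
    rw [hfn x, if_pos hx]
    have h1 : 1 - ((n : ℝ) - 1) / n * (1 - x ^ (-α) / n)⁻¹ =
        (1 - x ^ (-α)) / n * (1 - x ^ (-α) / n)⁻¹ := by
      have h : (1 - x ^ (-α)) / (n:ℝ) = (1 - x ^ (-α) / n) - ((n:ℝ) - 1) / n := by
        field_simp
        ring
      rw [h, sub_mul, mul_inv_cancel₀ hu.ne']
    rw [h1, abs_mul, abs_inv, abs_of_pos hu, abs_div, abs_of_pos hn0]
    have hpow : (1 - x ^ (-α) / n) ^ (n - 1) = (1 - x ^ (-α) / n) ^ (n - 2) * (1 - x ^ (-α) / n) := by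
      rw [show n - 1 = (n - 2) + 1 by omega, pow_succ]
    rw [hpow, hg_def]
    have hkey : ∀ A B v u : ℝ, u ≠ 0 →
        A / (n:ℝ) * u⁻¹ * (α * v * (B * u)) = α / (n:ℝ) * v * A * B := by
      intro A B v u hune
      field_simp
    exact hkey _ _ _ _ hu.ne'
  rw [setIntegral_congr_fun measurableSet_Ioi hcongr]
  -- split the integral at 1
  have hderivF : ∀ x : ℝ, 0 < x → HasDerivAt F (G x) x := fun x hx =>
    pareto_aux_deriv α hα n hn x hx
  -- Ioi 1 part
  have hxle : ∀ x : ℝ, 1 ≤ x → x ^ (-α) ≤ 1 := fun x hx =>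
    Real.rpow_le_one_of_one_le_of_nonpos hx (by linarith)
  have hderiv1 : ∀ x ∈ Ici (1:ℝ), HasDerivAt (fun y => -F y) (g x) x := by
    intro x hx
    simp only [mem_Ici] at hx
    have h := (hderivF x (by linarith)).neg
    have habs : |1 - x ^ (-α)| = 1 - x ^ (-α) := abs_of_nonneg (by linarith [hxle x hx])
    refine h.congr_deriv ?_
    rw [hg_def, hG_def]
    simp only
    rw [habs]
    ring
  have hgnonneg : ∀ x ∈ Ioi (1:ℝ), 0 ≤ g x := by
    intro x hx
    simp only [mem_Ioi] at hx
    have h1 : (0:ℝ) ≤ x ^ (-α - 1) := Real.rpow_nonneg (by linarith) _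
    have h2 : (0:ℝ) ≤ 1 - x ^ (-α) / n := le_of_lt (hu_pos x (by linarith))
    have := abs_nonneg (1 - x ^ (-α))
    positivity
  have htendsto : Filter.Tendsto (fun y => -F y) Filter.atTop (nhds 0) := by
    have t1 : Filter.Tendsto (fun x : ℝ => x ^ (-α)) Filter.atTop (nhds 0) :=
      tendsto_rpow_neg_atTop hα
    have t2 : Filter.Tendsto (fun x : ℝ => (1 - x ^ (-α) / n) ^ (n - 1) * x ^ (-α) / n)
        Filter.atTop (nhds ((1 - 0 / n) ^ (n - 1) * 0 / n)) :=
      ((((t1.div_const _).const_sub 1).pow _).mul t1).div_const _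
    simp only [zero_div, sub_zero, mul_zero, one_pow] at t2
    simpa [hF_def] using t2.neg
  have hint1 : IntegrableOn g (Ioi 1) volume :=
    integrableOn_Ioi_deriv_of_nonneg' hderiv1 hgnonneg htendsto
  have hval1 : ∫ x in Ioi (1:ℝ), g x = F 1 := by
    rw [integral_Ioi_of_hasDerivAt_of_nonneg' hderiv1 hgnonneg htendsto]
    ring
  -- Ioc a 1 part
  have hderiv2 : ∀ x ∈ uIcc a 1, HasDerivAt F (G x) x := by
    intro x hx
    rw [uIcc_of_le ha_lt1.le] at hx
    exact hderivF x (lt_of_lt_of_le ha_pos hx.1)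
  have hGcont : ContinuousOn G (uIcc a 1) := by
    rw [uIcc_of_le ha_lt1.le]
    have : ∀ x ∈ Icc a 1, ContinuousWithinAt G (Icc a 1) x := by
      intro x hx
      have hx0 : 0 < x := lt_of_lt_of_le ha_pos hx.1
      have c1 : ContinuousAt (fun y : ℝ => y ^ (-α)) x :=
        Real.continuousAt_rpow_const x _ (Or.inl hx0.ne')
      have c2 : ContinuousAt (fun y : ℝ => y ^ (-α - 1)) x :=
        Real.continuousAt_rpow_const x _ (Or.inl hx0.ne')
      exact ((((continuousAt_const.mul c2).mul (c1.sub continuousAt_const)).mul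
        ((continuousAt_const.sub (c1.div_const _)).pow _)).continuousWithinAt)
    exact this
  have hint2 : IntervalIntegrable G volume a 1 := hGcont.intervalIntegrable
  have hval2 : ∫ x in Ioc a 1, g x = F 1 - F a := by
    have heq : ∀ x ∈ Ioc a 1, g x = G x := by
      intro x hx
      have hxa : a < x := hx.1
      have hx0 : 0 < x := lt_trans ha_pos hxa
      have hge : 1 ≤ x ^ (-α) :=
        Real.one_le_rpow_of_pos_of_le_one_of_nonpos hx0 hx.2 (by linarith)
      have habs : |1 - x ^ (-α)| = x ^ (-α) - 1 := by
        rw [abs_of_nonpos (by linarith)]; ring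
      rw [hg_def, hG_def]
      simp only
      rw [habs]
    rw [setIntegral_congr_fun measurableSet_Ioc heq,
      ← intervalIntegral.integral_of_le ha_lt1.le,
      intervalIntegral.integral_eq_sub_of_hasDerivAt hderiv2 hint2]
  have hintOn2 : IntegrableOn g (Ioc a 1) volume := by
    have : IntegrableOn G (Ioc a 1) volume :=
      (intervalIntegrable_iff_integrableOn_Ioc_of_le ha_lt1.le).mp hint2
    apply this.congr_fun _ measurableSet_Ioc
    intro x hx
    have hxa : a < x := hx.1
    have hx0 : 0 < x := lt_trans ha_pos hxa
    have hge : 1 ≤ x ^ (-α) :=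
      Real.one_le_rpow_of_pos_of_le_one_of_nonpos hx0 hx.2 (by linarith)
    have habs : |1 - x ^ (-α)| = x ^ (-α) - 1 := by
      rw [abs_of_nonpos (by linarith)]; ring
    rw [hg_def, hG_def]
    simp only
    rw [habs]
  have hsplit : (Ioc a 1) ∪ (Ioi 1) = Ioi a := Ioc_union_Ioi_eq_Ioi ha_lt1.le
  rw [← hsplit, setIntegral_union (Ioc_disjoint_Ioi le_rfl) measurableSet_Ioi hintOn2 hint1,
    hval2, hval1]
  -- compute F 1 and F a
  have hF1 : F 1 = (1 - 1 / n) ^ (n - 1) / n := by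
    rw [hF_def]
    simp [Real.one_rpow]
  have hFa : F a = 0 := by
    rw [hF_def]
    simp only
    rw [ha_pow]
    have : (1 : ℝ) - (n:ℝ) / n = 0 := by field_simp; ring
    rw [this, zero_pow (by omega : n - 1 ≠ 0)]
    ring
  rw [hF1, hFa]
  have hnsub : (n:ℝ) - 1 ≠ 0 := by linarith
  have hpow : (1 - 1 / (n:ℝ)) ^ n = (1 - 1 / n) ^ (n - 1) * (1 - 1 / n) := by
    rw [← pow_succ, show n - 1 + 1 = n by omega]
  rw [hpow]
  field_simp
  ring
end

section
/- Let W_n be the maximum of n i.i.d. Pareto(α) random variables divided by n^{1/α}, and G Fréchet(α). Then sup_{x ∈ ℝ} |P(W_n ≤ x) − P(G ≤ x)| ≤ 2e^{-1}/(n-1) for all n ≥ 2. -/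
open Real

lemma aux2 (n : ℕ) (hn : 0 < n) (t : ℝ) (htn : t ≤ n) :
    (1 - t / n) ^ n ≤ Real.exp (-t) := by
  have hnn : (0:ℝ) < n := Nat.cast_pos.mpr hn
  have h1 : (0:ℝ) ≤ 1 - t / n := by
    rw [sub_nonneg, div_le_one hnn]; exact htn
  have h2 : 1 - t / n ≤ Real.exp (-(t / n)) := by
    linarith [Real.add_one_le_exp (-(t / n))]
  calc (1 - t / n) ^ n ≤ (Real.exp (-(t / n))) ^ n := pow_le_pow_left₀ h1 h2 n
    _ = Real.exp (n * (-(t / n))) := (Real.exp_nat_mul _ n).symm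
    _ = Real.exp (-t) := by rw [mul_neg, mul_div_cancel₀ _ hnn.ne']

lemma aux1 (n : ℕ) (hn : 0 < n) (t : ℝ) (ht0 : 0 ≤ t) (htn : t ≤ n) :
    Real.exp (-t) - (1 - t / n) ^ n ≤ t ^ 2 * Real.exp (-t) / n := by
  have hnn : (0:ℝ) < n := Nat.cast_pos.mpr hn
  set s : ℝ := t / n with hs
  have hs0 : 0 ≤ s := by positivity
  have hs1 : s ≤ 1 := by rw [hs, div_le_one hnn]; exact htn
  set A : ℝ := (1 - s) * Real.exp s with hA
  have hA0 : 0 ≤ A := mul_nonneg (by linarith) (Real.exp_pos s).le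
  have hlow : 1 - s ^ 2 ≤ A := by
    nlinarith [Real.add_one_le_exp s, Real.exp_pos s]
  have hbern : 1 + (n : ℝ) * (A - 1) ≤ A ^ n := by
    have := one_add_mul_le_pow (show (-2:ℝ) ≤ A - 1 by linarith) n
    simpa using this
  have hAn : 1 - A ^ n ≤ t ^ 2 / n := by
    have h1 : 1 - (n:ℝ) * s ^ 2 ≤ A ^ n := by nlinarith
    have h2 : (n:ℝ) * s ^ 2 = t ^ 2 / n := by
      rw [hs]; field_simp
    linarith
  have hexpn : A ^ n = (1 - s) ^ n * Real.exp t := by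
    rw [hA, mul_pow, ← Real.exp_nat_mul, mul_div_cancel₀ _ hnn.ne']
  have key : Real.exp (-t) - (1 - s) ^ n = Real.exp (-t) * (1 - A ^ n) := by
    rw [hexpn, mul_sub, mul_one, Real.exp_neg]
    field_simp
  rw [key]
  calc Real.exp (-t) * (1 - A ^ n) ≤ Real.exp (-t) * (t ^ 2 / n) :=
        mul_le_mul_of_nonneg_left hAn (Real.exp_pos _).le
    _ = t ^ 2 * Real.exp (-t) / n := by ring

lemma aux3 (t : ℝ) (ht : 0 ≤ t) : t ^ 2 * Real.exp (-t) ≤ 4 * Real.exp (-2) := by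
  have h := Real.add_one_le_exp (t / 2 - 1)
  have h2 : t / 2 ≤ Real.exp (t / 2 - 1) := by linarith
  have h3 : (t / 2) ^ 2 ≤ Real.exp (t / 2 - 1) ^ 2 :=
    pow_le_pow_left₀ (by positivity) h2 2
  have h4 : Real.exp (t / 2 - 1) ^ 2 = Real.exp t * Real.exp (-2) := by
    rw [← Real.exp_nat_mul, ← Real.exp_add]; norm_num; ring_nf
  rw [h4] at h3
  have hp := Real.exp_pos t
  rw [Real.exp_neg t, ← div_eq_mul_inv, div_le_iff₀ hp]
  nlinarith [Real.exp_pos (-2)]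

theorem pareto_max_kolmogorov_bound (α : ℝ) (hα : 0 < α) (n : ℕ) (hn : 2 ≤ n)
    (Fn Φ : ℝ → ℝ)
    (hFn : ∀ x : ℝ, Fn x =
      if (n : ℝ) ^ (-(1 / α)) ≤ x then (1 - x ^ (-α) / n) ^ n else 0)
    (hΦ : ∀ x : ℝ, Φ x = if 0 < x then Real.exp (-(x ^ (-α))) else 0) :
    ∀ x : ℝ, |Fn x - Φ x| ≤ 2 * Real.exp (-1) / ((n : ℝ) - 1) := by
  intro x
  have hn1 : (1:ℝ) < n := by exact_mod_cast Nat.lt_of_lt_of_le one_lt_two hn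
  have hn0 : (0:ℝ) < n := by linarith
  have hnm : (0:ℝ) < (n:ℝ) - 1 := by linarith
  have hc : (0:ℝ) < (n : ℝ) ^ (-(1 / α)) := Real.rpow_pos_of_pos hn0 _
  have hcn : ((n : ℝ) ^ (-(1 / α))) ^ (-α) = (n:ℝ) := by
    rw [← Real.rpow_mul hn0.le, show -(1 / α) * -α = 1 by field_simp, Real.rpow_one]
  have hrhs : (0:ℝ) < 2 * Real.exp (-1) / ((n : ℝ) - 1) := by positivity
  rw [hFn x, hΦ x]
  by_cases h1 : (n : ℝ) ^ (-(1 / α)) ≤ x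
  · have hx : 0 < x := lt_of_lt_of_le hc h1
    set t : ℝ := x ^ (-α) with hT
    have ht0 : 0 < t := Real.rpow_pos_of_pos hx _
    have htn : t ≤ n := by
      calc t ≤ ((n : ℝ) ^ (-(1 / α))) ^ (-α) :=
            Real.rpow_le_rpow_of_nonpos hc h1 (by linarith)
        _ = n := hcn
    rw [if_pos h1, if_pos hx]
    have ha1 := aux1 n (by omega) t ht0.le htn
    have ha2 := aux2 n (by omega) t htn
    have habs : |(1 - t / n) ^ n - Real.exp (-t)| = Real.exp (-t) - (1 - t / n) ^ n := by
      rw [abs_sub_comm, abs_of_nonneg (by linarith)]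
    rw [habs]
    have ha3 := aux3 t ht0.le
    have hstep : t ^ 2 * Real.exp (-t) / n ≤ 2 * Real.exp (-1) / ((n:ℝ) - 1) := by
      have he1 : Real.exp (-2) = Real.exp (-1) * Real.exp (-1) := by
        rw [← Real.exp_add]; norm_num
      have h2e : (2:ℝ) ≤ Real.exp 1 := by linarith [Real.add_one_le_exp 1]
      have he2 : 2 * Real.exp (-1) ≤ 1 := by
        rw [Real.exp_neg]
        rw [mul_inv_le_iff₀ (Real.exp_pos 1)]
        linarith
      rw [div_le_div_iff₀ hn0 hnm]
      have hmul := mul_le_mul_of_nonneg_right ha3 (show (0:ℝ) ≤ (n:ℝ) - 1 by linarith)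
      have hhint : 0 ≤ Real.exp (-1) * ((n:ℝ) - 1) * (1 - 2 * Real.exp (-1)) :=
        mul_nonneg (mul_nonneg (Real.exp_pos (-1:ℝ)).le (by linarith)) (by linarith)
      nlinarith [Real.exp_pos (-1:ℝ), Real.exp_pos (-2:ℝ), hnm, hhint]
    linarith
  · rw [if_neg h1]
    by_cases h2 : 0 < x
    · rw [if_pos h2]
      have hxc : x < (n : ℝ) ^ (-(1 / α)) := lt_of_not_ge h1
      have htn : (n:ℝ) < x ^ (-α) := by
        calc (n:ℝ) = ((n : ℝ) ^ (-(1 / α))) ^ (-α) := hcn.symm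
          _ < x ^ (-α) := Real.rpow_lt_rpow_of_neg h2 hxc (by linarith)
      have hb : Real.exp (-x ^ (-α)) ≤ Real.exp (-1) / ((n:ℝ) - 1) := by
        have h5 : Real.exp (-x ^ (-α)) ≤ Real.exp (-(n:ℝ)) :=
          Real.exp_le_exp.mpr (by linarith)
        have h6 : (n:ℝ) - 1 ≤ Real.exp ((n:ℝ) - 1) := by
          linarith [Real.add_one_le_exp ((n:ℝ) - 1)]
        have h7 : Real.exp (-(n:ℝ)) = Real.exp (-1) / Real.exp ((n:ℝ) - 1) := by
          rw [eq_div_iff (Real.exp_pos _).ne', ← Real.exp_add]; ring_nf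
        rw [h7] at h5
        calc Real.exp (-x ^ (-α)) ≤ Real.exp (-1) / Real.exp ((n:ℝ) - 1) := h5
          _ ≤ Real.exp (-1) / ((n:ℝ) - 1) :=
            div_le_div_of_nonneg_left (Real.exp_pos _).le hnm h6
      rw [abs_sub_comm, sub_zero, abs_of_nonneg (Real.exp_pos _).le]
      have : Real.exp (-1) / ((n:ℝ) - 1) ≤ 2 * Real.exp (-1) / ((n:ℝ) - 1) := by
        gcongr
        linarith [Real.exp_pos (-1:ℝ)]
      linarith
    · rw [if_neg h2]; simpa using hrhs.le
end

section
/- For all real x and all n ≥ 2, (1 - x^{-α}/n)^n - e^{-x^{-α}} considered on x ≥ n^{-1/α} satisfies |(1 - x^{-α}/n)^n - e^{-x^{-α}}| ≤ 2e^{-1}/(n-1). -/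
open Real

lemma exp_neg_le_quadratic {s : ℝ} (h0 : 0 ≤ s) (h1 : s ≤ 1) :
    Real.exp (-s) ≤ 1 - s + s ^ 2 / 2 := by
  have habs : |(-s)| ≤ 1 := by rw [abs_neg, abs_of_nonneg h0]; exact h1
  have h := Real.exp_bound habs (n := 4) (by norm_num)
  have hsum : ∑ m ∈ Finset.range 4, (-s) ^ m / (Nat.factorial m) =
      1 - s + s ^ 2 / 2 - s ^ 3 / 6 := by
    simp [Finset.sum_range_succ, Nat.factorial]
    ring
  rw [hsum, abs_neg, abs_of_nonneg h0] at h
  have h2 := (abs_sub_le_iff.1 h).1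
  norm_num [Nat.factorial] at h2
  nlinarith [pow_nonneg h0 3, pow_nonneg h0 4, pow_le_pow_of_le_one h0 h1 (by norm_num : 3 ≤ 4)]

lemma sq_mul_exp_neg_le {u : ℝ} (hu : 0 ≤ u) : u ^ 2 * Real.exp (-u) ≤ 4 * Real.exp (-2) := by
  have h := Real.add_one_le_exp (u / 2 - 1)
  have h' : u / 2 ≤ Real.exp (u / 2 - 1) := by linarith
  have hsq : (u / 2) ^ 2 ≤ Real.exp (u / 2 - 1) ^ 2 := by
    apply pow_le_pow_left₀ (by positivity) h'
  have he : Real.exp (u / 2 - 1) ^ 2 = Real.exp (u - 2) := by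
    rw [← Real.exp_nat_mul]; ring_nf
  rw [he] at hsq
  have : u ^ 2 ≤ 4 * Real.exp (u - 2) := by nlinarith
  calc u ^ 2 * Real.exp (-u) ≤ 4 * Real.exp (u - 2) * Real.exp (-u) := by
        exact mul_le_mul_of_nonneg_right this (Real.exp_nonneg _)
    _ = 4 * Real.exp (-2) := by rw [mul_assoc, ← Real.exp_add, show u - 2 + -u = -2 by ring]

set_option maxHeartbeats 1600000 in
lemma key_bound (n : ℕ) (hn : 2 ≤ n) (t : ℝ) (ht0 : 0 ≤ t) (htn : t ≤ (n : ℝ)) :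
    |(1 - t / n) ^ n - Real.exp (-t)| ≤ 2 * Real.exp (-1) / ((n : ℝ) - 1) := by
  have hn0 : (0 : ℝ) < n := by positivity
  set s : ℝ := t / n with hs
  have hs0 : 0 ≤ s := by positivity
  have hs1 : s ≤ 1 := by rw [hs, div_le_one hn0]; exact htn
  set a : ℝ := Real.exp (-s) with ha
  set b : ℝ := 1 - s with hb
  have hb0 : 0 ≤ b := by simp [hb]; linarith
  have hba : b ≤ a := by
    have := Real.add_one_le_exp (-s)
    simp [ha, hb]; linarith
  have ha1 : a ≤ 1 := Real.exp_le_one_iff.mpr (by linarith)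
  have ha0 : 0 ≤ a := Real.exp_nonneg _
  have hexp : Real.exp (-t) = a ^ n := by
    rw [ha, ← Real.exp_nat_mul]
    congr 1
    field_simp [hs]
    rw [hs]; field_simp
  have hpow : b ^ n ≤ a ^ n := pow_le_pow_left₀ hb0 hba n
  rw [hexp, abs_sub_comm, abs_of_nonneg (by linarith)]
  -- a^n - b^n ≤ n * a^(n-1) * (a - b)
  have hfact : a ^ n - b ^ n = (∑ i ∈ Finset.range n, a ^ i * b ^ (n - 1 - i)) * (a - b) :=
    (geom_sum₂_mul a b n).symm
  have hsumle : ∑ i ∈ Finset.range n, a ^ i * b ^ (n - 1 - i) ≤ n * a ^ (n - 1) := by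
    calc ∑ i ∈ Finset.range n, a ^ i * b ^ (n - 1 - i)
        ≤ ∑ i ∈ Finset.range n, a ^ (n - 1) := by
          apply Finset.sum_le_sum
          intro i hi
          have hi' : i < n := Finset.mem_range.mp hi
          calc a ^ i * b ^ (n - 1 - i) ≤ a ^ i * a ^ (n - 1 - i) := by
                apply mul_le_mul_of_nonneg_left (pow_le_pow_left₀ hb0 hba _) (pow_nonneg ha0 _)
            _ = a ^ (n - 1) := by
                rw [← pow_add]; congr 1; omega
      _ = n * a ^ (n - 1) := by rw [Finset.sum_const, Finset.card_range, nsmul_eq_mul]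
  have hab : a - b ≤ s ^ 2 / 2 := by
    have := exp_neg_le_quadratic hs0 hs1
    simp only [ha, hb]; linarith
  have hmain : a ^ n - b ^ n ≤ (n : ℝ) * a ^ (n - 1) * (s ^ 2 / 2) := by
    rw [hfact]
    apply mul_le_mul hsumle hab (by linarith) (by positivity)
  refine hmain.trans ?_
  -- now a^(n-1) = exp(-(n-1)*s)
  have hm : (1 : ℝ) ≤ (n : ℝ) - 1 := by
    have : (2 : ℝ) ≤ n := by exact_mod_cast hn
    linarith
  set u : ℝ := ((n : ℝ) - 1) * s with hu
  have hu0 : 0 ≤ u := by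
    apply mul_nonneg (by linarith) hs0
  have hapow : a ^ (n - 1) = Real.exp (-u) := by
    rw [ha, ← Real.exp_nat_mul]
    congr 1
    have : ((n - 1 : ℕ) : ℝ) = (n : ℝ) - 1 := by
      have : 1 ≤ n := by omega
      push_cast [this]; ring
    rw [this, hu]; ring
  rw [hapow]
  have hsu : s = u / ((n : ℝ) - 1) := by
    rw [hu]; field_simp
  have hkey : u ^ 2 * Real.exp (-u) ≤ 4 * Real.exp (-2) := sq_mul_exp_neg_le hu0
  have hexp2 : Real.exp (-2) = Real.exp (-1) * Real.exp (-1) := by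
    rw [← Real.exp_add]; norm_num
  -- n * exp(-u) * (s^2/2) = n * u^2 * exp(-u) / (2 (n-1)^2) ≤ 2 n exp(-2)/(n-1)^2
  have step1 : (n : ℝ) * Real.exp (-u) * (s ^ 2 / 2) ≤ 2 * (n : ℝ) * Real.exp (-2) / ((n : ℝ) - 1) ^ 2 := by
    rw [hsu]
    have h1 : (n : ℝ) * Real.exp (-u) * ((u / ((n : ℝ) - 1)) ^ 2 / 2)
        = (n : ℝ) * (u ^ 2 * Real.exp (-u)) / (2 * ((n : ℝ) - 1) ^ 2) := by
      field_simp
    rw [h1]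
    rw [div_le_div_iff₀ (by positivity) (by positivity)]
    have := mul_le_mul_of_nonneg_left hkey (le_of_lt hn0)
    nlinarith [Real.exp_nonneg (-2), sq_nonneg ((n:ℝ) - 1)]
  refine step1.trans ?_
  rw [div_le_div_iff₀ (by positivity) (by linarith), hexp2]
  have hexpe : (2 : ℝ) ≤ Real.exp 1 := by
    have := Real.add_one_le_exp 1
    linarith
  have hninv : (n : ℝ) * Real.exp (-1) ≤ (n : ℝ) - 1 := by
    have hone : Real.exp 1 * Real.exp (-1) = 1 := by rw [← Real.exp_add]; norm_num
    have hle : (n : ℝ) ≤ ((n : ℝ) - 1) * Real.exp 1 := by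
      have h2n : (2 : ℝ) ≤ n := by exact_mod_cast hn
      nlinarith
    calc (n : ℝ) * Real.exp (-1) ≤ ((n : ℝ) - 1) * Real.exp 1 * Real.exp (-1) :=
          mul_le_mul_of_nonneg_right hle (Real.exp_nonneg _)
      _ = (n : ℝ) - 1 := by rw [mul_assoc, hone, mul_one]
  nlinarith [Real.exp_nonneg (-1), sq_nonneg ((n:ℝ)-1), mul_le_mul_of_nonneg_left hninv (Real.exp_nonneg (-1))]

theorem pareto_frechet_pointwise_bound (α : ℝ) (hα : 0 < α) (n : ℕ) (hn : 2 ≤ n) :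
    ∀ x : ℝ, (n : ℝ) ^ (-(1 / α)) ≤ x →
      |(1 - x ^ (-α) / n) ^ n - Real.exp (-(x ^ (-α)))| ≤
        2 * Real.exp (-1) / ((n : ℝ) - 1) := by
  intro x hx
  have hn0 : (0 : ℝ) < n := by positivity
  have hx0 : (0 : ℝ) < x := lt_of_lt_of_le (Real.rpow_pos_of_pos hn0 _) hx
  set t : ℝ := x ^ (-α) with ht
  have ht0 : 0 ≤ t := Real.rpow_nonneg hx0.le _
  have htn : t ≤ n := by
    have h1 : x ^ (-α) ≤ ((n : ℝ) ^ (-(1 / α))) ^ (-α) := by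
      apply Real.rpow_le_rpow_of_nonpos (Real.rpow_pos_of_pos hn0 _) hx (by linarith)
    have h2 : ((n : ℝ) ^ (-(1 / α))) ^ (-α) = (n : ℝ) := by
      rw [← Real.rpow_mul hn0.le]
      have he : -(1 / α) * (-α) = 1 := by field_simp
      rw [he, Real.rpow_one]
    rw [h2] at h1
    exact h1
  exact key_bound n hn t ht0 htn
end

section
/- Let G be Fréchet(α) and W a positive random variable with differentiable density f on an interval support, with score ρ = (log f)'. For any bounded differentiable φ with φ(x)x^{α+1} f(x) → 0 at both endpoints of the support (and assuming integrability), E[φ'(W) W^{α+1} + φ(W) W^α (α+1+ W ρ(W))] = 0. -/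
open Real MeasureTheory Filter Set

theorem general_stein_identity (α : ℝ) (hα : 0 < α)
    (a b : ℝ) (hab : 0 ≤ a) (hab' : a < b)
    (f : ℝ → ℝ)
    (hf_nonneg : ∀ x ∈ Set.Ioo a b, 0 < f x)
    (hf_diff : ∀ x ∈ Set.Ioo a b, DifferentiableAt ℝ f x)
    (hf_density : ∫ x in Set.Ioo a b, f x = 1)
    (ρ : ℝ → ℝ) (hρ : ∀ x ∈ Set.Ioo a b, ρ x = deriv f x / f x)
    (φ : ℝ → ℝ) (hφ_bdd : ∃ C, ∀ x, |φ x| ≤ C)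
    (hφ_diff : ∀ x ∈ Set.Ioo a b, DifferentiableAt ℝ φ x)
    (hlim_a : Tendsto (fun x => φ x * x ^ (α + 1) * f x) (nhdsWithin a (Set.Ioo a b)) (nhds 0))
    (hlim_b : Tendsto (fun x => φ x * x ^ (α + 1) * f x) (nhdsWithin b (Set.Ioo a b)) (nhds 0))
    (hint : IntegrableOn
      (fun x => (deriv φ x * x ^ (α + 1) + φ x * x ^ α * (α + 1 + x * ρ x)) * f x)
      (Set.Ioo a b))
    (hint' : IntegrableOn (fun x => deriv φ x * x ^ (α + 1) * f x) (Set.Ioo a b)) :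
    ∫ x in Set.Ioo a b,
      (deriv φ x * x ^ (α + 1) + φ x * x ^ α * (α + 1 + x * ρ x)) * f x = 0 := by
  set g' : ℝ → ℝ :=
    fun x => (deriv φ x * x ^ (α + 1) + φ x * x ^ α * (α + 1 + x * ρ x)) * f x with hg'
  set G : ℝ → ℝ := fun x => if x ∈ Set.Ioo a b then φ x * x ^ (α + 1) * f x else 0 with hG
  have hGa : G a = 0 := by simp [hG, lt_irrefl]
  have hGb : G b = 0 := by simp [hG, lt_irrefl]
  -- G has derivative g' on Ioo a b
  have hderiv : ∀ x ∈ Set.Ioo a b, HasDerivAt G (g' x) x := by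
    intro x hx
    have hx0 : 0 < x := lt_of_le_of_lt hab hx.1
    have hfx := hf_nonneg x hx
    have h1 : HasDerivAt φ (deriv φ x) x := (hφ_diff x hx).hasDerivAt
    have h2 : HasDerivAt f (deriv f x) x := (hf_diff x hx).hasDerivAt
    have h3 : HasDerivAt (fun y : ℝ => y ^ (α + 1)) ((α + 1) * x ^ α) x := by
      have := Real.hasDerivAt_rpow_const (p := α + 1) (Or.inl hx0.ne')
      simpa using this
    have h4 : HasDerivAt (fun y => φ y * y ^ (α + 1) * f y)
        ((deriv φ x * x ^ (α + 1) + φ x * ((α + 1) * x ^ α)) * f x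
          + φ x * x ^ (α + 1) * deriv f x) x := (h1.mul h3).mul h2
    have hEq : G =ᶠ[nhds x] fun y => φ y * y ^ (α + 1) * f y := by
      filter_upwards [isOpen_Ioo.mem_nhds hx] with y hy
      simp [hG, hy.1, hy.2]
    have h5 := h4.congr_of_eventuallyEq hEq
    convert h5 using 1
    rotate_left 2
    simp only [hg', hρ x hx]
    have hxx : x ^ α * x = x ^ (1 + α) := by
      rw [add_comm, Real.rpow_add_one hx0.ne']
    field_simp
    ring_nf
    rw [← hxx]
    ring
    all_goals rfl
  have hcont : ContinuousOn G (Set.Icc a b) := by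
    intro x hx
    rcases eq_or_ne x a with rfl | hxa
    · have : Tendsto G (nhdsWithin x (Set.Icc x b \ {x})) (nhds 0) := by
        rw [Set.Icc_diff_left, nhdsWithin_Ioc_eq_nhdsGT hab',
          ← nhdsWithin_Ioo_eq_nhdsGT hab']
        apply hlim_a.congr'
        filter_upwards [self_mem_nhdsWithin] with y hy
        simp [hG, hy.1, hy.2]
      rw [← continuousWithinAt_diff_self]
      unfold ContinuousWithinAt
      rw [hGa]
      exact this
    rcases eq_or_ne x b with rfl | hxb
    · have : Tendsto G (nhdsWithin x (Set.Icc a x \ {x})) (nhds 0) := by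
        rw [Set.Icc_sdiff_right, nhdsWithin_Ico_eq_nhdsLT hab',
          ← nhdsWithin_Ioo_eq_nhdsLT hab']
        apply hlim_b.congr'
        filter_upwards [self_mem_nhdsWithin] with y hy
        simp [hG, hy.1, hy.2]
      rw [← continuousWithinAt_diff_self]
      unfold ContinuousWithinAt
      rw [hGb]
      exact this
    · have hx' : x ∈ Set.Ioo a b := ⟨lt_of_le_of_ne hx.1 (Ne.symm hxa), lt_of_le_of_ne hx.2 hxb⟩
      exact ((hderiv x hx').continuousAt).continuousWithinAt
  have hint2 : IntegrableOn g' (Set.Ioc a b) := by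
    rw [integrableOn_Ioc_iff_integrableOn_Ioo]
    exact hint
  have key : ∫ y in a..b, g' y = G b - G a := by
    apply intervalIntegral.integral_eq_sub_of_hasDeriv_right_of_le hab'.le hcont
      (fun x hx => (hderiv x hx).hasDerivWithinAt)
    rw [intervalIntegrable_iff_integrableOn_Ioc_of_le hab'.le]
    exact hint2
  rw [intervalIntegral.integral_of_le hab'.le, MeasureTheory.integral_Ioc_eq_integral_Ioo,
    hGa, hGb] at key
  simpa using key
end

section
/- Under the assumptions of the Fréchet Stein identity: if W has density f with score ρ and G is Fréchet(α), then for any h such that φ_h = T_α^{-1} h lies in the admissible class, E h(W) − E h(G) = α E[ φ_h(W) (1 − W^α((α+1)/α + (W/α) ρ(W))) ]. -/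
open Real MeasureTheory Filter Set Topology

theorem frechet_stein_comparison (α : ℝ) (hα : 0 < α)
    (a b : ℝ) (hab : 0 ≤ a) (hab' : a < b)
    (f : ℝ → ℝ)
    (hf_nonneg : ∀ x ∈ Set.Ioo a b, 0 < f x)
    (hf_diff : ∀ x ∈ Set.Ioo a b, DifferentiableAt ℝ f x)
    (hf_density : ∫ x in Set.Ioo a b, f x = 1)
    (ρ : ℝ → ℝ) (hρ : ∀ x ∈ Set.Ioo a b, ρ x = deriv f x / f x)
    (h : ℝ → ℝ)
    (hint_hW : IntegrableOn (fun x => h x * f x) (Set.Ioo a b))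
    (hint_hG : IntegrableOn
      (fun x => h x * (α * x ^ (-α - 1) * Real.exp (-(x ^ (-α))))) (Set.Ioi 0))
    (μh : ℝ)
    (hμh : μh = ∫ x in Set.Ioi (0 : ℝ), h x * (α * x ^ (-α - 1) * Real.exp (-(x ^ (-α)))))
    (φh : ℝ → ℝ)
    (hφh_diff : ∀ x ∈ Set.Ioo a b, DifferentiableAt ℝ φh x)
    (hstein : ∀ x : ℝ, 0 < x → deriv φh x * x ^ (α + 1) + α * φh x = h x - μh)
    (hlim_a : Tendsto (fun x => φh x * x ^ (α + 1) * f x) (nhdsWithin a (Set.Ioo a b)) (nhds 0))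
    (hlim_b : Tendsto (fun x => φh x * x ^ (α + 1) * f x) (nhdsWithin b (Set.Ioo a b)) (nhds 0))
    (hint1 : IntegrableOn (fun x => deriv φh x * x ^ (α + 1) * f x) (Set.Ioo a b))
    (hint2 : IntegrableOn
      (fun x => φh x * (1 - x ^ α * ((α + 1) / α + x / α * ρ x)) * f x) (Set.Ioo a b)) :
    (∫ x in Set.Ioo a b, h x * f x) - μh =
      α * ∫ x in Set.Ioo a b,
        φh x * (1 - x ^ α * ((α + 1) / α + x / α * ρ x)) * f x := by
  have hmeas : MeasurableSet (Set.Ioo a b) := measurableSet_Ioo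
  -- every point of Ioo a b is positive
  have hpos : ∀ x ∈ Set.Ioo a b, (0:ℝ) < x := fun x hx => lt_of_le_of_lt hab hx.1
  -- f is integrable on Ioo a b
  have hf_int : IntegrableOn f (Set.Ioo a b) := by
    by_contra hc
    rw [MeasureTheory.integral_undef hc] at hf_density
    norm_num at hf_density
  -- (h - μh) * f is integrable
  have hint_hm : IntegrableOn (fun x => (h x - μh) * f x) (Set.Ioo a b) := by
    have h2 : IntegrableOn (fun x => h x * f x - μh * f x) (Set.Ioo a b) :=
      hint_hW.sub (hf_int.const_mul μh)
    exact h2.congr_fun (fun x _ => by ring) hmeas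
  -- α * φh * f is integrable
  have hint_phf : IntegrableOn (fun x => α * (φh x * f x)) (Set.Ioo a b) := by
    have h2 : IntegrableOn (fun x => (h x - μh) * f x - deriv φh x * x ^ (α + 1) * f x)
        (Set.Ioo a b) := hint_hm.sub hint1
    refine h2.congr_fun (fun x hx => ?_) hmeas
    have hs := hstein x (hpos x hx)
    beta_reduce; rw [← hs]; ring
  -- the derivative function
  set g' : ℝ → ℝ := fun x => deriv φh x * x ^ (α + 1) * f x
      + (α * (φh x * f x) - α * (φh x * (1 - x ^ α * ((α + 1) / α + x / α * ρ x)) * f x))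
    with hg'def
  have hg'_eq : ∀ x ∈ Set.Ioo a b,
      g' x = deriv φh x * x ^ (α + 1) * f x
        + (φh x * ((α + 1) * x ^ α) * f x + φh x * x ^ (α + 1) * deriv f x) := by
    intro x hx
    have hx0 : (0:ℝ) < x := hpos x hx
    have hfx : f x ≠ 0 := (hf_nonneg x hx).ne'
    have hrx : ρ x = deriv f x / f x := hρ x hx
    have hxp : x ^ (α + 1) = x ^ α * x := by
      rw [Real.rpow_add hx0, Real.rpow_one]
    simp only [hg'def, hrx, hxp]
    field_simp
    ring
  -- integrability of g'
  have hint_g' : IntegrableOn g' (Set.Ioo a b) := hint1.add (hint_phf.sub (hint2.const_mul α))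
  -- derivative identity
  have hderiv : ∀ x ∈ Set.Ioo a b,
      HasDerivAt (fun y => φh y * y ^ (α + 1) * f y) (g' x) x := by
    intro x hx
    have hx0 : (0:ℝ) < x := hpos x hx
    have hd1 : HasDerivAt φh (deriv φh x) x := (hφh_diff x hx).hasDerivAt
    have hd2 : HasDerivAt (fun y : ℝ => y ^ (α + 1)) ((α + 1) * x ^ α) x := by
      have := Real.hasDerivAt_rpow_const (p := α + 1) (Or.inl hx0.ne')
      simpa using this
    have hd3 : HasDerivAt f (deriv f x) x := (hf_diff x hx).hasDerivAt
    have : HasDerivAt (fun y => φh y * y ^ (α + 1) * f y)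
        ((deriv φh x * x ^ (α + 1) + φh x * ((α + 1) * x ^ α)) * f x
          + φh x * x ^ (α + 1) * deriv f x) x := (hd1.mul hd2).mul hd3
    rw [hg'_eq x hx]
    convert this using 1
    ring
  -- FTC : integral of g' over Ioo a b is 0
  have hIoo_int : IntervalIntegrable g' volume a b :=
    (intervalIntegrable_iff_integrableOn_Ioo_of_le hab'.le).mpr hint_g'
  have hzero : ∫ x in Set.Ioo a b, g' x = 0 := by
    have hla : Tendsto (fun x => φh x * x ^ (α + 1) * f x) (𝓝[>] a) (nhds 0) := by
      rwa [← nhdsWithin_Ioo_eq_nhdsGT hab']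
    have hlb : Tendsto (fun x => φh x * x ^ (α + 1) * f x) (𝓝[<] b) (nhds 0) := by
      rwa [← nhdsWithin_Ioo_eq_nhdsLT hab']
    have := intervalIntegral.integral_eq_sub_of_hasDerivAt_of_tendsto hab' hderiv
      hIoo_int hla hlb
    rw [intervalIntegral.integral_of_le hab'.le, integral_Ioc_eq_integral_Ioo] at this
    simpa using this
  -- split the integral of g'
  have hsplit : ∫ x in Set.Ioo a b, g' x
      = (∫ x in Set.Ioo a b, deriv φh x * x ^ (α + 1) * f x)
        + ((∫ x in Set.Ioo a b, α * (φh x * f x))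
          - α * ∫ x in Set.Ioo a b, φh x * (1 - x ^ α * ((α + 1) / α + x / α * ρ x)) * f x) := by
    have hsub : IntegrableOn (fun x => α * (φh x * f x)
        - α * (φh x * (1 - x ^ α * ((α + 1) / α + x / α * ρ x)) * f x)) (Set.Ioo a b) :=
      hint_phf.sub (hint2.const_mul α)
    rw [hg'def, MeasureTheory.integral_add hint1 hsub,
      MeasureTheory.integral_sub hint_phf (hint2.const_mul α),
      MeasureTheory.integral_const_mul, MeasureTheory.integral_const_mul]
  -- LHS rewriting
  have hlhs : (∫ x in Set.Ioo a b, h x * f x) - μh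
      = ∫ x in Set.Ioo a b, (h x - μh) * f x := by
    have e : ∫ x in Set.Ioo a b, (h x - μh) * f x
        = ∫ x in Set.Ioo a b, (h x * f x - μh * f x) := by
      refine MeasureTheory.setIntegral_congr_fun hmeas (fun x _ => ?_); ring
    rw [e, MeasureTheory.integral_sub hint_hW (hf_int.const_mul μh),
      MeasureTheory.integral_const_mul, hf_density, mul_one]
  have hlhs2 : ∫ x in Set.Ioo a b, (h x - μh) * f x
      = (∫ x in Set.Ioo a b, deriv φh x * x ^ (α + 1) * f x)
        + ∫ x in Set.Ioo a b, α * (φh x * f x) := by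
    rw [← MeasureTheory.integral_add hint1 hint_phf]
    refine MeasureTheory.setIntegral_congr_fun hmeas (fun x hx => ?_)
    have hs := hstein x (hpos x hx)
    rw [← hs]; ring
  rw [hzero] at hsplit
  linarith [hsplit, hlhs, hlhs2]
end
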